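/- arXiv:2307.09179 — 3 statements merged into one kernel-verified Lean document; each statement's English description precedes it below -/
import Mathlib

section
/- Let G be a connected finite simple block graph and let v and w be distinct vertices of G. Then there is a unique shortest path in G connecting v and w, and this shortest path is an induced path of G. -/
open SimpleGraph

/-- An induced path in a simple graph `G`: a walk which is a path and such that the
subgraph of `G` induced on its vertex set equals the path. -/
structure InducedPath {V : Type*} (G : SimpleGraph V) where
  first : V
  last : V
  walk : G.Walk first last
  isPath : walk.IsPath
  induced : ∀ x ∈ walk.support, ∀ y ∈ walk.support, G.Adj x y → s(x, y) ∈ walk.edges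

namespace InducedPath

variable {V : Type*} {G : SimpleGraph V}

/-- The vertex set of an induced path. -/
def vertexSet (P : InducedPath G) : Set V := {v | v ∈ P.walk.support}

/-- The edge set of an induced path. -/
def edgeSet (P : InducedPath G) : Set (Sym2 V) := {e | e ∈ P.walk.edges}

/-- The terminal vertices `∂P` of an induced path. -/
def boundary (P : InducedPath G) : Set V := {P.first, P.last}

/-- The internal vertices `P°` of an induced path. -/
def interior (P : InducedPath G) : Set V := P.vertexSet \ P.boundary

end InducedPath

section FamilyDefs

variable {V : Type*} (G : SimpleGraph V) {ℓ : ℕ}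

/-- `Q` contains `P` as a subgraph. -/
def PathContains (Q P : InducedPath G) : Prop :=
  P.vertexSet ⊆ Q.vertexSet ∧ P.edgeSet ⊆ Q.edgeSet

/-- The vertex set of `P_ind`, the induced subgraph on `⋃ i, V(P i)`. -/
def famVerts (P : Fin ℓ → InducedPath G) : Set V := ⋃ i, (P i).vertexSet

/-- The union of the edge sets of the paths `P i`. -/
def famEdges (P : Fin ℓ → InducedPath G) : Set (Sym2 V) := ⋃ i, (P i).edgeSet

/-- The paths `P i` are pairwise vertex-disjoint. -/
def PairwiseVertexDisjoint (P : Fin ℓ → InducedPath G) : Prop :=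
  ∀ i j : Fin ℓ, i ≠ j → Disjoint (P i).vertexSet (P j).vertexSet

/-- `φ` is an orientation of the induced path `P`, i.e. a surjection `{1,2} → ∂P`. -/
def IsOrientation (P : InducedPath G) (φ : Fin 2 → V) : Prop :=
  Set.range φ = P.boundary

/-- `Q` is an induced path of `P_ind` (equivalently, an induced path of `G` all of whose
vertices belong to `⋃ i, V(P i)`). -/
def IsPathOfInd (P : Fin ℓ → InducedPath G) (Q : InducedPath G) : Prop :=
  Q.vertexSet ⊆ famVerts G P

/-- The data `(P, σ, φ)` is DOIP. -/
def IsDOIPData (P : Fin ℓ → InducedPath G) (σ : Equiv.Perm (Fin ℓ))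
    (φ : Fin ℓ → Fin 2 → V) : Prop :=
  (∀ i, IsOrientation G (P i) (φ i)) ∧
    ∀ i j : Fin ℓ, σ i ≤ σ j → ∀ Q : InducedPath G, IsPathOfInd G P Q →
      ({Q.first, Q.last} : Set V) = {φ (σ i) 0, φ (σ j) 1} →
      ∃ k, PathContains G Q (P k)

/-- The family `P` is DOIP: there exist `σ` and orientations making it DOIP. -/
def FamilyDOIP (P : Fin ℓ → InducedPath G) : Prop :=
  ∃ (σ : Equiv.Perm (Fin ℓ)) (φ : Fin ℓ → Fin 2 → V), IsDOIPData G P σ φ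

/-- `Q` realizes an arc `(i,j)` of the directed multigraph `K_{P_ind}`. -/
def KArcWitness (P : Fin ℓ → InducedPath G) (φ : Fin ℓ → Fin 2 → V) (i j : Fin ℓ)
    (Q : InducedPath G) : Prop :=
  IsPathOfInd G P Q ∧ ({Q.first, Q.last} : Set V) = {φ i 0, φ j 1} ∧
    ∀ k, ¬ PathContains G Q (P k)

/-- `(i,j)` is an arc of `K_{P_ind}`. -/
def KArc (P : Fin ℓ → InducedPath G) (φ : Fin ℓ → Fin 2 → V) (i j : Fin ℓ) : Prop :=
  ∃ Q : InducedPath G, KArcWitness G P φ i j Q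

/-- The directed multigraph `K_{P_ind}` is directed acyclic (no loops and no directed
cycles). -/
def KAcyclic (P : Fin ℓ → InducedPath G) (φ : Fin ℓ → Fin 2 → V) : Prop :=
  ∀ i : Fin ℓ, ¬ Relation.TransGen (KArc G P φ) i i

/-- `Q` is a strand of `P_ind` from `P i` to `P j`. -/
def IsStrand (P : Fin ℓ → InducedPath G) (φ : Fin ℓ → Fin 2 → V) (i j : Fin ℓ)
    (Q : InducedPath G) : Prop :=
  i ≠ j ∧ IsPathOfInd G P Q ∧ Q.first ≠ φ i 1 ∧ Q.last ≠ φ j 0 ∧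
    Q.vertexSet ∩ (P i).vertexSet = {Q.first} ∧
    Q.vertexSet ∩ (P j).vertexSet = {Q.last} ∧
    ∀ k, ¬ PathContains G Q (P k)

/-- `Q` is an internal strand of `P_ind` from `P i` to `P j`. -/
def IsInternalStrand (P : Fin ℓ → InducedPath G) (i j : Fin ℓ) (Q : InducedPath G) : Prop :=
  i ≠ j ∧ IsPathOfInd G P Q ∧
    Q.first ∈ (P i).interior ∧ Q.last ∈ (P j).interior ∧
    Q.vertexSet ∩ (P i).vertexSet = {Q.first} ∧
    Q.vertexSet ∩ (P j).vertexSet = {Q.last} ∧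
    ∀ k, ¬ PathContains G Q (P k)

/-- `(Q, b, c)` is an internal fork of `P_ind` from `P i` to `P j`. -/
def IsInternalFork (P : Fin ℓ → InducedPath G) (i j : Fin ℓ) (Q : InducedPath G)
    (b c : V) : Prop :=
  i ≠ j ∧ IsPathOfInd G P Q ∧ Q.first ∈ (P i).interior ∧
    Q.vertexSet ∩ (P i).vertexSet = {Q.first} ∧
    Q.vertexSet ∩ (P j).vertexSet = ∅ ∧
    b ∈ (P j).vertexSet ∧ c ∈ (P j).vertexSet ∧ b ≠ c ∧
    G.Adj Q.last b ∧ G.Adj Q.last c ∧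
    ∀ k, ¬ PathContains G Q (P k)

/-- `(Q, a, b, c, d)` is a double fork of `P_ind` from `P i` to `P j`. -/
def IsDoubleFork (P : Fin ℓ → InducedPath G) (i j : Fin ℓ) (Q : InducedPath G)
    (a b c d : V) : Prop :=
  i ≠ j ∧ IsPathOfInd G P Q ∧
    Q.vertexSet ∩ (P i).vertexSet = ∅ ∧
    Q.vertexSet ∩ (P j).vertexSet = ∅ ∧
    a ∈ (P i).vertexSet ∧ b ∈ (P i).vertexSet ∧ a ≠ b ∧
    c ∈ (P j).vertexSet ∧ d ∈ (P j).vertexSet ∧ c ≠ d ∧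
    G.Adj Q.first a ∧ G.Adj Q.first b ∧ G.Adj Q.last c ∧ G.Adj Q.last d ∧
    ∀ k, ¬ PathContains G Q (P k)

/-- `(a, b, c, d)` is a complete ladder of `P_ind` between `P i` and `P j`. -/
def IsCompleteLadder (P : Fin ℓ → InducedPath G) (i j : Fin ℓ) (a b c d : V) : Prop :=
  i ≠ j ∧ a ∈ (P i).vertexSet ∧ b ∈ (P i).vertexSet ∧ a ≠ b ∧
    c ∈ (P j).vertexSet ∧ d ∈ (P j).vertexSet ∧ c ≠ d ∧
    G.Adj a b ∧ G.Adj a c ∧ G.Adj a d ∧ G.Adj b c ∧ G.Adj b d ∧ G.Adj c d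

/-- `P_ind` contains an internal strand, an internal fork, a double fork, or a
complete ladder. -/
def HasForbidden (P : Fin ℓ → InducedPath G) : Prop :=
  (∃ i j Q, IsInternalStrand G P i j Q) ∨
  (∃ i j Q b c, IsInternalFork G P i j Q b c) ∨
  (∃ i j Q a b c d, IsDoubleFork G P i j Q a b c d) ∨
  (∃ i j a b c d, IsCompleteLadder G P i j a b c d)

/-- `P_ind` contains a complete ladder, or an internal strand, internal fork, or double
fork which is edge-disjoint from the family `P`. -/
def HasForbiddenEdgeDisjoint (P : Fin ℓ → InducedPath G) : Prop :=
  (∃ i j Q, IsInternalStrand G P i j Q ∧ Disjoint Q.edgeSet (famEdges G P)) ∨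
  (∃ i j Q b c, IsInternalFork G P i j Q b c ∧
    Disjoint (Q.edgeSet ∪ {s(Q.last, b), s(Q.last, c)}) (famEdges G P)) ∨
  (∃ i j Q a b c d, IsDoubleFork G P i j Q a b c d ∧
    Disjoint (Q.edgeSet ∪ {s(Q.first, a), s(Q.first, b), s(Q.last, c), s(Q.last, d)})
      (famEdges G P)) ∨
  (∃ i j a b c d, IsCompleteLadder G P i j a b c d)

end FamilyDefs

section Invariants

variable {V : Type*}

/-- The invariant `ν(G)`: the maximal total number of edges of a family of
vertex-disjoint induced paths of `G` which is DOIP. -/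
noncomputable def nu (G : SimpleGraph V) : ℕ :=
  sSup {n : ℕ | ∃ (ℓ : ℕ) (P : Fin ℓ → InducedPath G),
    PairwiseVertexDisjoint G P ∧ FamilyDOIP G P ∧ n = ∑ i, (P i).walk.length}

/-- `ℓ(G)`: the number of edges of a longest induced path of `G`. -/
noncomputable def longestInducedPathLength (G : SimpleGraph V) : ℕ :=
  sSup {n : ℕ | ∃ P : InducedPath G, n = P.walk.length}

end Invariants

section BlockGraphs

variable {V : Type*} {G : SimpleGraph V}

/-- A subgraph is biconnected if it is connected and remains connected after
deleting any single vertex. -/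
def SubgraphBiconnected (H : G.Subgraph) : Prop :=
  H.coe.Connected ∧ ∀ v : V, ((H.deleteVerts {v}).coe).Connected

/-- A block of `G` is a maximal biconnected subgraph. -/
def IsBlock (H : G.Subgraph) : Prop :=
  SubgraphBiconnected H ∧ ∀ H' : G.Subgraph, SubgraphBiconnected H' → H ≤ H' → H' = H

/-- `G` is a block graph if every block of `G` is a complete graph. -/
def IsBlockGraph (G : SimpleGraph V) : Prop :=
  ∀ H : G.Subgraph, IsBlock H → ∀ a ∈ H.verts, ∀ b ∈ H.verts, a ≠ b → H.Adj a b

/-- The intersection `Q ∩ R` of two induced paths, as a subgraph of `G`. -/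
def pathsInter (Q R : InducedPath G) : G.Subgraph where
  verts := Q.vertexSet ∩ R.vertexSet
  Adj a b := G.Adj a b ∧ s(a, b) ∈ Q.walk.edges ∧ s(a, b) ∈ R.walk.edges
  adj_sub h := h.1
  edge_vert h := ⟨Q.walk.fst_mem_support_of_mem_edges h.2.1,
    R.walk.fst_mem_support_of_mem_edges h.2.2⟩
  symm := by
    constructor
    intro a b h
    refine ⟨h.1.symm, ?_, ?_⟩
    · rw [Sym2.eq_swap]; exact h.2.1
    · rw [Sym2.eq_swap]; exact h.2.2

/-- `s` is a maximal clique of `G`. -/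
def IsMaxClique (G : SimpleGraph V) (s : Set V) : Prop :=
  G.IsClique s ∧ ∀ t : Set V, G.IsClique t → s ⊆ t → s = t

/-- `G` has the two-block property: every vertex belongs to at most two maximal
cliques. -/
def TwoBlockProperty (G : SimpleGraph V) : Prop :=
  ∀ v : V, ({s : Set V | IsMaxClique G s ∧ v ∈ s}).ncard ≤ 2

/-- The completion `G_c` of `G` at the vertex `c`. -/
def completionAt (G : SimpleGraph V) (c : V) : SimpleGraph V where
  Adj u w := G.Adj u w ∨ (u ≠ w ∧ G.Adj c u ∧ G.Adj c w)
  symm := by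
    constructor
    intro u w h
    rcases h with h | ⟨hne, h1, h2⟩
    · exact Or.inl h.symm
    · exact Or.inr ⟨hne.symm, h2, h1⟩
  loopless := by
    constructor
    intro u h
    rcases h with h | ⟨hne, _, _⟩
    · exact G.irrefl h
    · exact hne rfl

/-- The number of connected components of a graph. -/
noncomputable def numComponents (G : SimpleGraph V) : ℕ :=
  Nat.card G.ConnectedComponent

/-- `c` is a cut vertex of `G`: deleting it strictly increases the number of
connected components. -/
def IsCutVertex (G : SimpleGraph V) (c : V) : Prop :=
  numComponents G < numComponents (G.induce ({c}ᶜ : Set V))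

end BlockGraphs

section AuxProof

variable {V : Type*} {G : SimpleGraph V}

/-- Decompose a walk at the first vertex belonging to a given list `L`
(which contains the endpoint `w`). -/
private lemma aux_firstMeet {x w : V} (p : G.Walk x w) (L : List V) (hw : w ∈ L) :
    ∃ (b : V) (r₁ : G.Walk x b) (r₂ : G.Walk b w),
      r₁.append r₂ = p ∧ b ∈ L ∧ ∀ z ∈ r₁.support, z ∈ L → z = b := by
  induction p with
  | nil => exact ⟨_, Walk.nil, Walk.nil, rfl, hw, by simp⟩
  | @cons a c w h r ih =>
    by_cases ha : a ∈ L
    · exact ⟨a, Walk.nil, Walk.cons h r, rfl, ha, by simp⟩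
    · obtain ⟨b, r₁, r₂, hsp, hbL, hfirst⟩ := ih hw
      refine ⟨b, Walk.cons h r₁, r₂, by rw [Walk.cons_append, hsp], hbL, ?_⟩
      intro z hz hzL
      rw [Walk.support_cons, List.mem_cons] at hz
      rcases hz with rfl | hz
      · exact absurd hzL ha
      · exact hfirst z hz hzL

private lemma aux_finiteSubgraph [Finite V] : Finite (G.Subgraph) := by
  apply Finite.of_injective (fun H : G.Subgraph => (H.verts, H.Adj))
  intro H1 H2 h
  rw [Prod.mk.injEq] at h
  exact SimpleGraph.Subgraph.ext h.1 h.2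

/-- Every biconnected subgraph is contained in a block. -/
private lemma aux_exists_block [Finite V] {H : G.Subgraph}
    (hH : SubgraphBiconnected H) : ∃ B : G.Subgraph, IsBlock B ∧ H ≤ B := by
  haveI : Finite (G.Subgraph) := aux_finiteSubgraph
  have hS : {K : G.Subgraph | SubgraphBiconnected K ∧ H ≤ K}.Finite := Set.toFinite _
  obtain ⟨B, hBmem, hBmax⟩ :=
    Set.Finite.exists_maximalFor id _ hS ⟨H, hH, le_rfl⟩
  exact ⟨B, ⟨hBmem.1, fun H' hH' hle => le_antisymm (hBmax ⟨hH', hBmem.2.trans hle⟩ hle) hle⟩,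
    hBmem.2⟩

/-- Deleting the base vertex of a cycle from its subgraph yields the subgraph of a
path. -/
private lemma aux_cycle_delete [DecidableEq V] {z : V} {c : G.Walk z z}
    (hc : c.IsCycle) : ∃ (a b : V) (e : G.Walk a b),
      c.toSubgraph.deleteVerts {z} = e.toSubgraph := by
  cases c with
  | nil => exact absurd rfl hc.ne_nil
  | @cons _ a _ h₁ d =>
    have hd3 : 2 ≤ d.length := by
      have h3 := hc.three_le_length
      rw [Walk.length_cons] at h3
      omega
    cases hrev : d.reverse with
    | nil =>
      exfalso
      have h0 : d.reverse.length = 0 := by rw [hrev]; rfl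
      rw [Walk.length_reverse] at h0
      omega
    | @cons _ b _ h₂ e' =>
      -- h₂ : G.Adj z b, e' : G.Walk b a
      have hd : d = e'.reverse.append (Walk.cons h₂.symm Walk.nil) := by
        have h := congrArg Walk.reverse hrev
        rw [Walk.reverse_reverse, Walk.reverse_cons] at h
        exact h
      set e : G.Walk a b := e'.reverse with he_def
      have hsupd : d.support = e.support ++ [z] := by
        rw [hd, Walk.support_append]
        rfl
      have htail : (e.support ++ [z]).Nodup := by
        have h2 := hc.2
        rwa [Walk.support_cons, List.tail_cons, hsupd] at h2
      have hze : z ∉ e.support := by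
        intro hz
        rw [List.nodup_append] at htail
        exact htail.2.2 z hz z (by simp) rfl
      have hedg : (Walk.cons h₁ d).edges = s(z, a) :: (e.edges ++ [s(b, z)]) := by
        rw [Walk.edges_cons, hd, Walk.edges_append]
        rfl
      have hsup : (Walk.cons h₁ d).support = z :: (e.support ++ [z]) := by
        rw [Walk.support_cons, hsupd]
      refine ⟨a, b, e, ?_⟩
      apply SimpleGraph.Subgraph.ext
      · rw [SimpleGraph.Subgraph.deleteVerts_verts, Walk.verts_toSubgraph,
          Walk.verts_toSubgraph]
        ext t
        constructor
        · rintro ⟨ht, htz⟩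
          rw [Set.mem_setOf_eq, hsup, List.mem_cons, List.mem_append,
            List.mem_singleton] at ht
          rw [Set.mem_singleton_iff] at htz
          rcases ht with rfl | ht | rfl
          · exact absurd rfl htz
          · exact ht
          · exact absurd rfl htz
        · intro ht
          refine ⟨?_, fun h => hze (h ▸ ht)⟩
          rw [Set.mem_setOf_eq, hsup, List.mem_cons, List.mem_append]
          exact Or.inr (Or.inl ht)
      · funext x y
        apply propext
        rw [SimpleGraph.Subgraph.deleteVerts_adj]
        rw [← SimpleGraph.Subgraph.mem_edgeSet, ← SimpleGraph.Subgraph.mem_edgeSet,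
          Walk.mem_edges_toSubgraph, Walk.mem_edges_toSubgraph, hedg]
        simp only [Set.mem_singleton_iff, Walk.mem_verts_toSubgraph]
        constructor
        · rintro ⟨_, hxz, _, hyz, h⟩
          rw [List.mem_cons, List.mem_append, List.mem_singleton] at h
          rcases h with h | h | h
          · exfalso
            have : z ∈ s(x, y) := h ▸ Sym2.mem_mk_left z a
            rcases Sym2.mem_iff.mp this with rfl | rfl
            · exact hxz rfl
            · exact hyz rfl
          · exact h
          · exfalso
            have : z ∈ s(x, y) := h ▸ Sym2.mem_mk_right b z
            rcases Sym2.mem_iff.mp this with rfl | rfl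
            · exact hxz rfl
            · exact hyz rfl
        · intro h
          have hx : x ∈ e.support := Walk.fst_mem_support_of_mem_edges e h
          have hy : y ∈ e.support := Walk.snd_mem_support_of_mem_edges e h
          refine ⟨?_, fun hh => hze (hh ▸ hx), ?_, fun hh => hze (hh ▸ hy), ?_⟩
          · rw [hsup]; simp [hx]
          · rw [hsup]; simp [hy]
          · rw [List.mem_cons, List.mem_append]
            exact Or.inr (Or.inl h)

/-- The subgraph of a cycle is biconnected. -/
private lemma aux_cycle_biconnected [DecidableEq V] {u : V} {c : G.Walk u u}
    (hc : c.IsCycle) : SubgraphBiconnected c.toSubgraph := by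
  constructor
  · exact c.toSubgraph_connected.coe
  · intro z
    by_cases hz : z ∈ c.support
    · obtain ⟨a, b, e, heq⟩ := aux_cycle_delete (hc.rotate hz)
      rw [Walk.toSubgraph_rotate] at heq
      rw [heq]
      exact e.toSubgraph_connected.coe
    · have heq : c.toSubgraph.deleteVerts {z} = c.toSubgraph := by
        apply SimpleGraph.Subgraph.ext
        · rw [SimpleGraph.Subgraph.deleteVerts_verts]
          apply Set.diff_singleton_eq_self
          rw [Walk.verts_toSubgraph]
          exact hz
        · funext x y
          apply propext
          rw [SimpleGraph.Subgraph.deleteVerts_adj]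
          constructor
          · rintro ⟨_, _, _, _, h⟩; exact h
          · intro h
            have hx := h.fst_mem
            have hy := h.snd_mem
            rw [Walk.verts_toSubgraph] at hx hy
            exact ⟨by rwa [Walk.verts_toSubgraph], fun hh => hz (hh ▸ hx),
              by rwa [Walk.verts_toSubgraph], fun hh => hz (hh ▸ hy), h⟩
      rw [heq]
      exact c.toSubgraph_connected.coe

/-- In a block graph, any two distinct vertices on a common cycle are adjacent. -/
private lemma aux_cycle_adj [Finite V] [DecidableEq V] (hBG : IsBlockGraph G)
    {u a b : V} {c : G.Walk u u} (hc : c.IsCycle) (ha : a ∈ c.support)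
    (hb : b ∈ c.support) (hab : a ≠ b) : G.Adj a b := by
  obtain ⟨B, hB, hle⟩ := aux_exists_block (aux_cycle_biconnected hc)
  refine B.adj_sub (hBG B hB a ?_ b ?_ hab)
  · exact hle.1 ((Walk.mem_verts_toSubgraph c).mpr ha)
  · exact hle.1 ((Walk.mem_verts_toSubgraph c).mpr hb)

/-- On a shortest path, `takeUntil` and `dropUntil` realize the distances. -/
private lemma aux_takeUntil_length [DecidableEq V] (hconn : G.Connected) {v w : V}
    (p : G.Walk v w) (hp : p.length = G.dist v w) {z : V} (hz : z ∈ p.support) :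
    (p.takeUntil z hz).length = G.dist v z ∧
      (p.dropUntil z hz).length = G.dist z w := by
  have h1 := SimpleGraph.dist_le (p.takeUntil z hz)
  have h2 := SimpleGraph.dist_le (p.dropUntil z hz)
  have h3 : (p.takeUntil z hz).length + (p.dropUntil z hz).length = p.length := by
    rw [← Walk.length_append, Walk.take_spec]
  have h4 := hconn.dist_triangle (u := v) (v := z) (w := w)
  omega

/-- Uniqueness of shortest paths in a block graph. -/
private lemma aux_unique_shortest [Finite V] [DecidableEq V] (hBG : IsBlockGraph G)
    (hconn : G.Connected) :
    ∀ (n : ℕ) (v w : V) (p q : G.Walk v w), p.IsPath → q.IsPath →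
      p.length = n → q.length = n → n = G.dist v w → p = q := by
  intro n
  induction n with
  | zero =>
    intro v w p q _ _ hpl hql _
    cases p with
    | nil =>
      cases q with
      | nil => rfl
      | cons h q => simp at hql
    | cons h p => simp at hpl
  | succ n ih =>
    intro v w p q hp hq hpl hql hdist
    cases p with
    | nil => simp at hpl
    | @cons _ x _ hvx p' =>
      cases q with
      | nil => simp at hql
      | @cons _ y _ hvy q' =>
        rw [Walk.length_cons, Nat.add_right_cancel_iff] at hpl hql
        rw [Walk.cons_isPath_iff] at hp hq
        obtain ⟨hp', hvp'⟩ := hp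
        obtain ⟨hq', hvq'⟩ := hq
        have hdx : G.dist x w = n := by
          have h1 := SimpleGraph.dist_le p'
          have h2 := hconn.dist_triangle (u := v) (v := x) (w := w)
          have h3 := SimpleGraph.dist_le hvx.toWalk
          simp only [Walk.length_cons, Walk.length_nil, Adj.toWalk] at h3
          omega
        have hdy : G.dist y w = n := by
          have h1 := SimpleGraph.dist_le q'
          have h2 := hconn.dist_triangle (u := v) (v := y) (w := w)
          have h3 := SimpleGraph.dist_le hvy.toWalk
          simp only [Walk.length_cons, Walk.length_nil, Adj.toWalk] at h3
          omega
        by_cases hxy : x = y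
        · subst hxy
          rw [ih x w p' q' hp' hq' hpl hql hdx.symm]
        · exfalso
          obtain ⟨b, r₁, r₂, hsplit, hbq, hfirst⟩ :=
            aux_firstMeet p' q'.support q'.end_mem_support
          have hr : r₁.length + r₂.length = n := by
            rw [← Walk.length_append, hsplit]; exact hpl
          have hr₁sub : ∀ t ∈ r₁.support, t ∈ p'.support := by
            intro t ht
            rw [← hsplit]
            exact Walk.subset_support_append_left _ _ ht
          set s₁ : G.Walk y b := q'.takeUntil b hbq with hs₁_def
          have hs₁sub : ∀ t ∈ s₁.support, t ∈ q'.support :=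
            fun t ht => Walk.support_takeUntil_subset q' hbq ht
          have hs₁path : s₁.IsPath := hq'.takeUntil hbq
          have hr₁path : r₁.IsPath := by
            rw [← hsplit] at hp'
            exact hp'.of_append_left
          -- the path D from x back to v around the cycle
          set E : G.Walk b v := s₁.reverse.append (Walk.cons hvy.symm Walk.nil)
            with hE_def
          set D : G.Walk x v := r₁.append E with hD_def
          have hEsupp : E.support = s₁.support.reverse ++ [v] := by
            rw [hE_def, Walk.support_append, Walk.support_reverse]
            rfl
          have hnn : s₁.support.reverse ≠ [] := by
            rw [← Walk.support_reverse]; exact Walk.support_ne_nil _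
          have hDsupp : D.support = r₁.support ++ (s₁.support.reverse.tail ++ [v]) := by
            rw [hD_def, Walk.support_append, hEsupp, List.tail_append_of_ne_nil hnn]
          have hs₁rev : s₁.support.reverse = b :: s₁.support.reverse.tail := by
            have : s₁.reverse.support = b :: s₁.reverse.support.tail :=
              Walk.support_eq_cons s₁.reverse
            rwa [Walk.support_reverse] at this
          have hndrev : s₁.support.reverse.Nodup := by
            rw [List.nodup_reverse]; exact hs₁path.support_nodup
          have hbtail : b ∉ s₁.support.reverse.tail := by
            have hnd := hndrev
            rw [hs₁rev, List.nodup_cons] at hnd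
            exact hnd.1
          have hDpath : D.IsPath := by
            rw [Walk.isPath_def, hDsupp]
            rw [List.nodup_append]
            refine ⟨hr₁path.support_nodup, ?_, ?_⟩
            · rw [List.nodup_append]
              refine ⟨?_, by simp, ?_⟩
              · exact List.Nodup.sublist (List.tail_sublist _) hndrev
              · intro t ht u hu hv'
                rw [List.mem_singleton] at hu
                rw [hu] at hv'
                have hvs : v ∈ s₁.support := by
                  rw [← List.mem_reverse, hs₁rev]
                  exact List.mem_cons_of_mem _ (hv' ▸ ht)
                exact hvq' (hs₁sub _ hvs)
            · intro t ht u ht' htu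
              subst htu
              rw [List.mem_append, List.mem_singleton] at ht'
              rcases ht' with ht' | rfl
              · have htq : t ∈ q'.support := by
                  apply hs₁sub
                  rw [← List.mem_reverse, hs₁rev]
                  exact List.mem_cons_of_mem _ ht'
                have : t = b := hfirst t ht htq
                subst this
                exact hbtail ht'
              · exact hvp' (hr₁sub _ ht)
          have hsvx : s(v, x) ∉ D.edges := by
            rw [hD_def, Walk.edges_append, hE_def, Walk.edges_append]
            intro hmem
            rw [List.mem_append, List.mem_append] at hmem
            rcases hmem with h | h | h
            · exact hvp' (hr₁sub _ (Walk.fst_mem_support_of_mem_edges r₁ h))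
            · have : v ∈ s₁.reverse.support :=
                Walk.fst_mem_support_of_mem_edges _ h
              rw [Walk.support_reverse, List.mem_reverse] at this
              exact hvq' (hs₁sub _ this)
            · simp only [Walk.edges_cons, Walk.edges_nil, List.mem_singleton] at h
              rw [Sym2.eq_iff] at h
              rcases h with ⟨h1, h2⟩ | ⟨h1, h2⟩
              · exact hvy.ne h1
              · exact hxy h2
          have hC : (Walk.cons hvx D).IsCycle :=
            (Walk.cons_isCycle_iff D hvx).mpr ⟨hDpath, hsvx⟩
          have hbD : b ∈ (Walk.cons hvx D).support := by
            rw [Walk.support_cons]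
            apply List.mem_cons_of_mem
            rw [hDsupp]
            exact List.mem_append_left _ r₁.end_mem_support
          have hbv : v ≠ b := by
            intro h
            exact hvp' (h ▸ hr₁sub _ r₁.end_mem_support)
          have hvb : G.Adj v b :=
            aux_cycle_adj hBG hC (Walk.start_mem_support _) hbD hbv
          -- conclude b = x
          have hdvb : G.dist v b = 1 := SimpleGraph.dist_eq_one_iff_adj.mpr hvb
          have hdbw := SimpleGraph.dist_le r₂
          have htri := hconn.dist_triangle (u := v) (v := b) (w := w)
          have hr₁0 : r₁.length = 0 := by
            have h2 := SimpleGraph.dist_le r₂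
            have : G.dist b w ≤ r₂.length := h2
            omega
          have hxb : x = b := Walk.eq_of_length_eq_zero hr₁0
          subst hxb
          -- x ∈ q'.support gives y = x
          have h5 := SimpleGraph.dist_le (q'.dropUntil x hbq)
          have h6 : (q'.takeUntil x hbq).length + (q'.dropUntil x hbq).length =
              q'.length := by rw [← Walk.length_append, Walk.take_spec]
          have ht0 : (q'.takeUntil x hbq).length = 0 := by omega
          exact hxy (Walk.eq_of_length_eq_zero ht0).symm

end AuxProof

/-- **Theorem (Statement 4).** In a connected finite simple block graph, any two
distinct vertices are joined by a unique shortest path, and this shortest path is an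
induced path. -/
theorem blockGraph_unique_shortest_path {V : Type*} [Fintype V] [DecidableEq V]
    (G : SimpleGraph V) (hBG : IsBlockGraph G) (hconn : G.Connected)
    (v w : V) (hvw : v ≠ w) :
    ∃ p : G.Walk v w, p.IsPath ∧
      (∀ q : G.Walk v w, p.length ≤ q.length) ∧
      (∀ q : G.Walk v w, q.IsPath → q.length ≤ p.length → q = p) ∧
      (∀ x ∈ p.support, ∀ y ∈ p.support, G.Adj x y → s(x, y) ∈ p.edges) := by
  obtain ⟨p, hp, hlen⟩ := hconn.exists_path_of_dist v w
  have huniq : ∀ q : G.Walk v w, q.IsPath → q.length ≤ p.length → q = p := by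
    intro q hq hql
    have hq' : q.length = G.dist v w :=
      le_antisymm (hlen ▸ hql) (SimpleGraph.dist_le q)
    exact aux_unique_shortest hBG hconn (G.dist v w) v w q p hq hp hq' hlen rfl
  refine ⟨p, hp, fun q => hlen ▸ SimpleGraph.dist_le q, huniq, ?_⟩
  -- inducedness
  have key : ∀ (x y : V) (hx : x ∈ p.support) (hy : y ∈ p.support), G.Adj x y →
      (p.takeUntil x hx).length < (p.takeUntil y hy).length → s(x, y) ∈ p.edges := by
    intro x y hx hy hxy hlt
    obtain ⟨hdx, hdx'⟩ := aux_takeUntil_length hconn p hlen hx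
    obtain ⟨hdy, hdy'⟩ := aux_takeUntil_length hconn p hlen hy
    have hd1 : G.dist x y = 1 := SimpleGraph.dist_eq_one_iff_adj.mpr hxy
    have htri := hconn.dist_triangle (u := v) (v := x) (w := y)
    have hsum : (p.takeUntil y hy).length + (p.dropUntil y hy).length = p.length := by
      rw [← Walk.length_append, Walk.take_spec]
    set S : G.Walk v w := (p.takeUntil x hx).append
      (Walk.cons hxy (p.dropUntil y hy)) with hS_def
    have hSlen : S.length = p.length := by
      rw [hS_def, Walk.length_append, Walk.length_cons]
      omega
    have hSpath : S.IsPath := S.isPath_of_length_eq_dist (by rw [hSlen, hlen])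
    have hSp : S = p := huniq S hSpath (le_of_eq hSlen)
    have : s(x, y) ∈ S.edges := by
      rw [hS_def, Walk.edges_append, Walk.edges_cons]
      exact List.mem_append_right _ List.mem_cons_self
    rwa [hSp] at this
  intro x hx y hy hxy
  have hne : (p.takeUntil x hx).length ≠ (p.takeUntil y hy).length := by
    obtain ⟨hdx, hdx'⟩ := aux_takeUntil_length hconn p hlen hx
    obtain ⟨hdy, hdy'⟩ := aux_takeUntil_length hconn p hlen hy
    have hd1 : G.dist x y = 1 := SimpleGraph.dist_eq_one_iff_adj.mpr hxy
    have hd1' : G.dist y x = 1 := SimpleGraph.dist_eq_one_iff_adj.mpr hxy.symm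
    have hx' : x ∈ (p.takeUntil y hy).support ∨ x ∈ (p.dropUntil y hy).support := by
      rw [← Walk.mem_support_append_iff, Walk.take_spec]
      exact hx
    rcases hx' with hx' | hx'
    · -- x strictly before y
      obtain ⟨h1, h2⟩ := aux_takeUntil_length hconn (p.takeUntil y hy) hdy hx'
      have hsum' : ((p.takeUntil y hy).takeUntil x hx').length +
          ((p.takeUntil y hy).dropUntil x hx').length = (p.takeUntil y hy).length := by
        rw [← Walk.length_append, Walk.take_spec]
      omega
    · -- y before x
      obtain ⟨h1, h2⟩ := aux_takeUntil_length hconn (p.dropUntil y hy) hdy' hx'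
      have hsx : (p.takeUntil x hx).length + (p.dropUntil x hx).length = p.length := by
        rw [← Walk.length_append, Walk.take_spec]
      have hsy : (p.takeUntil y hy).length + (p.dropUntil y hy).length = p.length := by
        rw [← Walk.length_append, Walk.take_spec]
      have hsub : ((p.dropUntil y hy).takeUntil x hx').length +
          ((p.dropUntil y hy).dropUntil x hx').length = (p.dropUntil y hy).length := by
        rw [← Walk.length_append, Walk.take_spec]
      have hdyx : G.dist y x ≥ 1 := by omega
      omega
  rcases lt_or_gt_of_ne hne with h | h
  · exact key x y hx hy hxy h
  · have := key y x hy hx hxy.symm h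
    rwa [Sym2.eq_swap] at this
end

section
/- Let Q = [v_1,…,v_r] and R = [w_1,…,w_s] be induced paths of a finite simple block graph which intersect non-trivially (V(Q) ∩ V(R) ≠ ∅). Then Q ∩ R is connected, and there is a unique decomposition Q = Q_1 * γ * Q_2 and R = R_1 * γ * R_2, where γ = Q ∩ R and Q_1, Q_2 (respectively R_1, R_2) are possibly single-vertex subpaths of Q (respectively of R). -/
open SimpleGraph

section AuxProof

open Walk

variable {V : Type*} {G : SimpleGraph V} [DecidableEq V]


lemma mem_tail_of_mem_support_ne {b c x : V} {w : G.Walk b c} (hx : x ∈ w.support)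
    (hne : x ≠ b) : x ∈ w.support.tail := by
  rw [w.support_eq_cons, List.mem_cons] at hx
  tauto

/-- A walk is induced if any `G`-edge between its support vertices is one of its edges. -/
def WInduced {a b : V} (w : G.Walk a b) : Prop :=
  ∀ x ∈ w.support, ∀ y ∈ w.support, G.Adj x y → s(x, y) ∈ w.edges

lemma winduced_append_left {a b c : V} {w1 : G.Walk a b} {w2 : G.Walk b c}
    (hp : (w1.append w2).IsPath) (hi : WInduced (w1.append w2)) : WInduced w1 := by
  intro x hx y hy hadj
  have hx' : x ∈ (w1.append w2).support := by rw [mem_support_append_iff]; exact Or.inl hx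
  have hy' : y ∈ (w1.append w2).support := by rw [mem_support_append_iff]; exact Or.inl hy
  have he := hi x hx' y hy' hadj
  rw [edges_append, List.mem_append] at he
  rcases he with he | he
  · exact he
  · exfalso
    have hx2 : x ∈ w2.support := w2.fst_mem_support_of_mem_edges he
    have hy2 : y ∈ w2.support := w2.snd_mem_support_of_mem_edges he
    have hnd := hp.support_nodup
    rw [support_append] at hnd
    have hdisj := List.disjoint_of_nodup_append hnd
    have hxb : x = b := by
      by_contra hne
      exact hdisj hx (mem_tail_of_mem_support_ne hx2 hne)
    have hyb : y = b := by
      by_contra hne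
      exact hdisj hy (mem_tail_of_mem_support_ne hy2 hne)
    exact hadj.ne (hxb.trans hyb.symm)

lemma winduced_append_right {a b c : V} {w1 : G.Walk a b} {w2 : G.Walk b c}
    (hp : (w1.append w2).IsPath) (hi : WInduced (w1.append w2)) : WInduced w2 := by
  intro x hx y hy hadj
  have hx' : x ∈ (w1.append w2).support := by rw [mem_support_append_iff]; exact Or.inr hx
  have hy' : y ∈ (w1.append w2).support := by rw [mem_support_append_iff]; exact Or.inr hy
  have he := hi x hx' y hy' hadj
  rw [edges_append, List.mem_append] at he
  rcases he with he | he
  · exfalso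
    have hx1 : x ∈ w1.support := w1.fst_mem_support_of_mem_edges he
    have hy1 : y ∈ w1.support := w1.snd_mem_support_of_mem_edges he
    have hnd := hp.support_nodup
    rw [support_append] at hnd
    have hdisj := List.disjoint_of_nodup_append hnd
    have hxb : x = b := by
      by_contra hne
      exact hdisj hx1 (mem_tail_of_mem_support_ne hx hne)
    have hyb : y = b := by
      by_contra hne
      exact hdisj hy1 (mem_tail_of_mem_support_ne hy hne)
    exact hadj.ne (hxb.trans hyb.symm)
  · exact he

lemma winduced_reverse {a b : V} {w : G.Walk a b} (hi : WInduced w) : WInduced w.reverse := by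
  intro x hx y hy hadj
  rw [support_reverse, List.mem_reverse] at hx hy
  rw [edges_reverse, List.mem_reverse]
  exact hi x hx y hy hadj

/-- appending paths meeting only at the junction gives a path -/
lemma isPath_append' {a b c : V} {w1 : G.Walk a b} {w2 : G.Walk b c} (h1 : w1.IsPath)
    (h2 : w2.IsPath) (hmeet : ∀ x ∈ w1.support, x ∈ w2.support → x = b) :
    (w1.append w2).IsPath := by
  rw [isPath_def, support_append]
  refine List.Nodup.append h1.support_nodup ?_ ?_
  · have := h2.support_nodup
    rw [w2.support_eq_cons] at this
    exact this.of_cons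
  · intro x hx1 hx2
    have hxb : x = b := hmeet x hx1 (List.mem_of_mem_tail hx2)
    subst hxb
    have := h2.support_nodup
    rw [w2.support_eq_cons] at this
    exact (List.nodup_cons.mp this).1 hx2

lemma takeUntil_start {a b : V} (w : G.Walk a b) (h : a ∈ w.support) :
    w.takeUntil a h = Walk.nil := by
  cases w with
  | nil => rfl
  | cons r p => simp [Walk.takeUntil]

lemma dropUntil_start {a b : V} (w : G.Walk a b) (h : a ∈ w.support) :
    w.dropUntil a h = w := by
  cases w with
  | nil => rfl
  | cons r p => simp [Walk.dropUntil]

lemma takeUntil_cons_ne {a a' b c : V} (r : G.Adj a a') (p : G.Walk a' b)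
    (h : c ∈ (Walk.cons r p).support) (hne : a ≠ c) (hc : c ∈ p.support) :
    (Walk.cons r p).takeUntil c h = Walk.cons r (p.takeUntil c hc) := by
  simp [Walk.takeUntil, dif_neg hne]

lemma dropUntil_cons_ne {a a' b c : V} (r : G.Adj a a') (p : G.Walk a' b)
    (h : c ∈ (Walk.cons r p).support) (hne : a ≠ c) (hc : c ∈ p.support) :
    (Walk.cons r p).dropUntil c h = p.dropUntil c hc := by
  simp [Walk.dropUntil, dif_neg hne]

lemma exists_first_meet {a b : V} (w : G.Walk a b) (S : Set V)
    (h : ∃ x ∈ w.support, x ∈ S) :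
    ∃ c, ∃ hc : c ∈ w.support, c ∈ S ∧
      ∀ x ∈ (w.takeUntil c hc).support, x ∈ S → x = c := by
  induction w with
  | nil =>
    obtain ⟨x, hx, hxS⟩ := h
    rw [mem_support_nil_iff] at hx
    subst hx
    refine ⟨x, by simp, hxS, ?_⟩
    intro y hy _
    have := support_takeUntil_subset _ (show x ∈ (Walk.nil : G.Walk x x).support by simp) hy
    rwa [mem_support_nil_iff] at this
  | @cons a a' b r p ih =>
    by_cases haS : a ∈ S
    · refine ⟨a, start_mem_support _, haS, ?_⟩
      intro y hy _
      rw [takeUntil_start] at hy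
      simpa using hy
    · obtain ⟨x, hx, hxS⟩ := h
      have hx' : x ∈ p.support := by
        rcases (by simpa using hx : x = a ∨ x ∈ p.support) with rfl | h'
        · exact absurd hxS haS
        · exact h'
      obtain ⟨c, hc, hcS, hfirst⟩ := ih ⟨x, hx', hxS⟩
      have hac : a ≠ c := fun h' => haS (h' ▸ hcS)
      refine ⟨c, by rw [support_cons]; exact List.mem_cons_of_mem _ hc, hcS, ?_⟩
      intro y hy hyS
      rw [takeUntil_cons_ne r p _ hac hc] at hy
      rcases (by simpa using hy : y = a ∨ y ∈ (p.takeUntil c hc).support) with rfl | h'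
      · exact absurd hyS haS
      · exact hfirst y h' hyS

lemma exists_last_meet {a b : V} (w : G.Walk a b) (S : Set V) (hw : w.support.Nodup)
    (h : ∃ x ∈ w.support, x ∈ S) :
    ∃ d, ∃ hd : d ∈ w.support, d ∈ S ∧
      ∀ x ∈ (w.dropUntil d hd).support, x ∈ S → x = d := by
  induction w with
  | nil =>
    obtain ⟨x, hx, hxS⟩ := h
    rw [mem_support_nil_iff] at hx
    subst hx
    refine ⟨x, by simp, hxS, ?_⟩
    intro y hy _
    have := support_dropUntil_subset _ (show x ∈ (Walk.nil : G.Walk x x).support by simp) hy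
    rwa [mem_support_nil_iff] at this
  | @cons a a' b r p ih =>
    by_cases hp : ∃ x ∈ p.support, x ∈ S
    · have hanp : a ∉ p.support := by
        rw [support_cons] at hw
        exact (List.nodup_cons.mp hw).1
      obtain ⟨d, hd, hdS, hlast⟩ := ih (by
        rw [support_cons] at hw
        exact (List.nodup_cons.mp hw).2) hp
      have had : a ≠ d := fun h' => hanp (h' ▸ hd)
      refine ⟨d, by rw [support_cons]; exact List.mem_cons_of_mem _ hd, hdS, ?_⟩
      intro y hy hyS
      rw [dropUntil_cons_ne r p _ had hd] at hy
      exact hlast y hy hyS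
    · push_neg at hp
      obtain ⟨x, hx, hxS⟩ := h
      have hxa : x = a := by
        rcases (by simpa using hx : x = a ∨ x ∈ p.support) with rfl | h'
        · rfl
        · exact absurd hxS (hp x h')
      subst hxa
      refine ⟨x, start_mem_support _, hxS, ?_⟩
      intro y hy hyS
      rw [dropUntil_start] at hy
      rcases (by simpa using hy : y = x ∨ y ∈ p.support) with rfl | h'
      · rfl
      · exact absurd hyS (hp y h')


private lemma eq_takeUntil_of_append_core {u v c : V} (a : G.Walk u c) :
    ∀ (b : G.Walk c v), (a.append b).support.Nodup →
      ∃ hc : c ∈ (a.append b).support,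
        a = (a.append b).takeUntil c hc ∧ b = (a.append b).dropUntil c hc := by
  induction a with
  | nil =>
    intro b hw
    refine ⟨start_mem_support _, ?_, ?_⟩
    · rw [takeUntil_start]
    · rw [dropUntil_start]
      rfl
  | @cons u u1 c r a' ih =>
    intro b hw
    have hrw : (Walk.cons r a').append b = Walk.cons r (a'.append b) := rfl
    rw [hrw] at hw ⊢
    have hw' : (a'.append b).support.Nodup := by
      rw [support_cons] at hw
      exact (List.nodup_cons.mp hw).2
    have hu : u ∉ (a'.append b).support := by
      rw [support_cons] at hw
      exact (List.nodup_cons.mp hw).1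
    obtain ⟨hc, h1, h2⟩ := ih b hw'
    have huc : u ≠ c := fun h' => hu (h' ▸ hc)
    refine ⟨by rw [support_cons]; exact List.mem_cons_of_mem _ hc, ?_, ?_⟩
    · rw [takeUntil_cons_ne r _ _ huc hc, ← h1]
    · rw [dropUntil_cons_ne r _ _ huc hc, ← h2]

lemma eq_takeUntil_of_append {u v c : V} {w : G.Walk u v} (hw : w.support.Nodup)
    (a : G.Walk u c) (b : G.Walk c v) (h : w = a.append b) :
    ∃ hc : c ∈ w.support, a = w.takeUntil c hc ∧ b = w.dropUntil c hc := by
  subst h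
  exact eq_takeUntil_of_append_core a b hw

lemma mem_dropUntil_eq_append {u v x y : V} {w : G.Walk u v} (hw : w.support.Nodup)
    (hy : y ∈ w.support) (hx : x ∈ (w.dropUntil y hy).support) :
    ∃ hx' : x ∈ w.support,
      w.dropUntil x hx' = (w.dropUntil y hy).dropUntil x hx := by
  have hspec := w.take_spec hy
  set T := w.takeUntil y hy with hT
  set D := w.dropUntil y hy with hD
  have hspec2 := D.take_spec hx
  have heq : w = (T.append (D.takeUntil x hx)).append (D.dropUntil x hx) := by
    rw [← append_assoc, hspec2, hspec]
  obtain ⟨hc, _, h2⟩ := eq_takeUntil_of_append hw _ _ heq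
  exact ⟨hc, h2.symm⟩

lemma mem_dropUntil_of_mem_takeUntil {u v x y : V} {w : G.Walk u v} (hw : w.support.Nodup)
    (hy : y ∈ w.support) (hx : x ∈ (w.takeUntil y hy).support) :
    ∃ hx' : x ∈ w.support, y ∈ (w.dropUntil x hx').support := by
  have hspec := w.take_spec hy
  set T := w.takeUntil y hy with hT
  set D := w.dropUntil y hy with hD
  have heq : w = (T.takeUntil x hx).append ((T.dropUntil x hx).append D) := by
    rw [append_assoc, T.take_spec hx, hspec]
  obtain ⟨hc, _, h2⟩ := eq_takeUntil_of_append hw _ _ heq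
  refine ⟨hc, ?_⟩
  rw [← h2, mem_support_append_iff]
  exact Or.inr (start_mem_support D)

lemma dropUntil_antisymm {u v x y : V} {w : G.Walk u v} (hw : w.IsPath)
    {hx : x ∈ w.support} {hy : y ∈ w.support}
    (h1 : x ∈ (w.dropUntil y hy).support) (h2 : y ∈ (w.dropUntil x hx).support) : x = y := by
  by_contra hne
  set T := w.takeUntil y hy with hT
  set D := w.dropUntil y hy with hD
  have hspec := w.take_spec hy
  have hDp : D.IsPath := hw.dropUntil hy
  have hxD : x ∈ D.support.tail := mem_tail_of_mem_support_ne h1 hne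
  obtain ⟨hx', heq⟩ := mem_dropUntil_eq_append hw.support_nodup hy h1
  have h2' : y ∈ (D.dropUntil x h1).support := by
    have hpe : w.dropUntil x hx = w.dropUntil x hx' := rfl
    rw [hpe, heq] at h2
    exact h2
  have hytail : y ∈ (D.dropUntil x h1).support.tail :=
    mem_tail_of_mem_support_ne h2' (Ne.symm hne)
  have hDnd : ((D.takeUntil x h1).append (D.dropUntil x h1)).support.Nodup := by
    rw [D.take_spec h1]; exact hDp.support_nodup
  rw [support_append] at hDnd
  exact (List.disjoint_of_nodup_append hDnd) (start_mem_support _) hytail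

lemma takeUntil_antisymm {u v x y : V} {w : G.Walk u v} (hw : w.IsPath)
    {hx : x ∈ w.support} {hy : y ∈ w.support}
    (h1 : x ∈ (w.takeUntil y hy).support) (h2 : y ∈ (w.takeUntil x hx).support) : x = y := by
  obtain ⟨hx', hy1⟩ := mem_dropUntil_of_mem_takeUntil hw.support_nodup hy h1
  obtain ⟨hy', hx1⟩ := mem_dropUntil_of_mem_takeUntil hw.support_nodup hx h2
  exact dropUntil_antisymm hw (hx := hx') (hy := hy') hx1 hy1

lemma mem_dropUntil_total {u v x y : V} {w : G.Walk u v} (hw : w.support.Nodup)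
    (hx : x ∈ w.support) (hy : y ∈ w.support) :
    x ∈ (w.dropUntil y hy).support ∨ y ∈ (w.dropUntil x hx).support := by
  have hspec := w.take_spec hy
  have hsplit : x ∈ (w.takeUntil y hy).support ∨ x ∈ (w.dropUntil y hy).support := by
    rw [← mem_support_append_iff, hspec]
    exact hx
  rcases hsplit with h | h
  · obtain ⟨hx', h'⟩ := mem_dropUntil_of_mem_takeUntil hw hy h
    right
    have hpe : w.dropUntil x hx = w.dropUntil x hx' := rfl
    rw [hpe]
    exact h'
  · exact Or.inl h

lemma cycle_delete_start_connected {v : V} (c : G.Walk v v) (hc : c.IsCycle) :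
    ((c.toSubgraph.deleteVerts {v}).coe).Connected := by
  cases c with
  | nil => exact absurd rfl hc.ne_nil
  | @cons _ w _ r q =>
    obtain ⟨hq, hre⟩ := ((Walk.cons_isCycle_iff q r).mp hc)
    have hlen : 2 ≤ q.length := by
      have := hc.three_le_length
      simpa [Walk.length_cons] using this
    have hvw : v ≠ w := by
      rintro rfl
      have : q = Walk.nil := Walk.isPath_iff_eq_nil.mp hq
      subst this
      simp at hlen
    cases hqr : q.reverse with
    | nil => exact absurd rfl hvw
    | @cons _ x2 _ r2 q2 =>
      have hqrp : q.reverse.IsPath := hq.reverse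
      rw [hqr] at hqrp
      have hvq2 : v ∉ q2.support := by
        have := hqrp.support_nodup
        rw [support_cons] at this
        exact (List.nodup_cons.mp this).1
      have hmemq : ∀ x, x ∈ q.support ↔ (x = v ∨ x ∈ q2.support) := by
        intro x
        rw [show q.support = q.reverse.support.reverse by rw [support_reverse, List.reverse_reverse]]
        rw [hqr, List.mem_reverse, support_cons, List.mem_cons]
      have hedgeq : ∀ e, e ∈ q2.edges → e ∈ q.edges := by
        intro e he
        have : e ∈ q.reverse.edges := by
          rw [hqr, edges_cons]
          exact List.mem_cons_of_mem _ he
        rwa [edges_reverse, List.mem_reverse] at this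
      have hle : q2.toSubgraph ≤ (Walk.cons r q).toSubgraph.deleteVerts {v} := by
        constructor
        · intro x hx
          rw [Walk.mem_verts_toSubgraph] at hx
          refine ⟨?_, ?_⟩
          · rw [Walk.mem_verts_toSubgraph, support_cons, List.mem_cons]
            exact Or.inr ((hmemq x).mpr (Or.inr hx))
          · intro hxv
            rw [Set.mem_singleton_iff] at hxv
            exact hvq2 (hxv ▸ hx)
        · intro x y hxy
          have he : s(x, y) ∈ q2.edges := by
            rwa [← Subgraph.mem_edgeSet, Walk.mem_edges_toSubgraph] at hxy
          have hxs : x ∈ q2.support := q2.fst_mem_support_of_mem_edges he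
          have hys : y ∈ q2.support := q2.snd_mem_support_of_mem_edges he
          rw [Subgraph.deleteVerts_adj]
          refine ⟨?_, ?_, ?_, ?_, ?_⟩
          · rw [Walk.mem_verts_toSubgraph, support_cons, List.mem_cons]
            exact Or.inr ((hmemq x).mpr (Or.inr hxs))
          · simp only [Set.mem_singleton_iff]
            exact fun h => hvq2 (h ▸ hxs)
          · rw [Walk.mem_verts_toSubgraph, support_cons, List.mem_cons]
            exact Or.inr ((hmemq y).mpr (Or.inr hys))
          · simp only [Set.mem_singleton_iff]
            exact fun h => hvq2 (h ▸ hys)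
          · rw [← Subgraph.mem_edgeSet, Walk.mem_edges_toSubgraph, edges_cons]
            exact List.mem_cons_of_mem _ (hedgeq _ he)
      have hverts : q2.toSubgraph.verts = ((Walk.cons r q).toSubgraph.deleteVerts {v}).verts := by
        ext x
        rw [Walk.mem_verts_toSubgraph]
        constructor
        · intro hx
          exact hle.1 (by rwa [Walk.mem_verts_toSubgraph])
        · rintro ⟨hx, hxv⟩
          rw [Set.mem_singleton_iff] at hxv
          rw [Walk.mem_verts_toSubgraph, support_cons, List.mem_cons] at hx
          rcases hx with rfl | hx
          · exact absurd rfl hxv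
          · rcases (hmemq x).mp hx with rfl | hx'
            · exact absurd rfl hxv
            · exact hx'
      have := (q2.toSubgraph_connected).mono hle hverts
      exact this.coe

lemma cycle_toSubgraph_biconnected {u : V} (c : G.Walk u u) (hc : c.IsCycle) :
    SubgraphBiconnected c.toSubgraph := by
  refine ⟨c.toSubgraph_connected.coe, ?_⟩
  intro v
  by_cases hv : v ∈ c.support
  · rw [← toSubgraph_rotate c hv]
    exact cycle_delete_start_connected (c.rotate v hv) (hc.rotate hv)
  · have : c.toSubgraph.deleteVerts {v} = c.toSubgraph := by
      ext x y
      · simp only [Subgraph.deleteVerts_verts, Set.mem_diff, Set.mem_singleton_iff,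
          Walk.mem_verts_toSubgraph, and_iff_left_iff_imp]
        rintro hx rfl
        exact hv hx
      · simp only [Subgraph.deleteVerts_adj, Set.mem_singleton_iff]
        constructor
        · rintro ⟨_, _, _, _, h⟩
          exact h
        · intro hxy
          have he : s(x, y) ∈ c.edges := by
            rwa [← Subgraph.mem_edgeSet, Walk.mem_edges_toSubgraph] at hxy
          have hxs := c.fst_mem_support_of_mem_edges he
          have hys := c.snd_mem_support_of_mem_edges he
          refine ⟨by rwa [Walk.mem_verts_toSubgraph], fun h => hv (h ▸ hxs),
            by rwa [Walk.mem_verts_toSubgraph], fun h => hv (h ▸ hys), hxy⟩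
    rw [this]
    exact c.toSubgraph_connected.coe

lemma exists_block_above [Finite V] {H : G.Subgraph} (hH : SubgraphBiconnected H) :
    ∃ K : G.Subgraph, IsBlock K ∧ H ≤ K := by
  have hfin : Finite G.Subgraph := by
    refine Finite.of_injective (fun K => (K.verts, K.Adj)) ?_
    intro K1 K2 h
    rw [Prod.mk.injEq] at h
    exact Subgraph.ext h.1 h.2
  obtain ⟨K, hK, hmax⟩ := Set.Finite.exists_maximalFor id
    {K : G.Subgraph | SubgraphBiconnected K ∧ H ≤ K} (Set.toFinite _) ⟨H, hH, le_refl H⟩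
  refine ⟨K, ⟨hK.1, ?_⟩, hK.2⟩
  intro K' hK' hle
  exact le_antisymm (hmax ⟨hK', hK.2.trans hle⟩ hle) hle

lemma cycle_clique (hBG : IsBlockGraph G) [Finite V] {u : V} (c : G.Walk u u)
    (hc : c.IsCycle) {x y : V} (hx : x ∈ c.support) (hy : y ∈ c.support) (hxy : x ≠ y) :
    G.Adj x y := by
  obtain ⟨K, hK, hle⟩ := exists_block_above (cycle_toSubgraph_biconnected c hc)
  have hxK : x ∈ K.verts := hle.1 (by rwa [Walk.mem_verts_toSubgraph])
  have hyK : y ∈ K.verts := hle.1 (by rwa [Walk.mem_verts_toSubgraph])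
  exact (hBG K hK x hxK y hyK hxy).adj_sub


lemma winduced_of_cons {u u1 v : V} {r : G.Adj u u1} {p' : G.Walk u1 v}
    (hp : (Walk.cons r p').IsPath) (hi : WInduced (Walk.cons r p')) : WInduced p' :=
  winduced_append_right (w1 := Walk.cons r Walk.nil) (w2 := p') hp hi

lemma head_nbr {u u1 v y : V} {r : G.Adj u u1} {p' : G.Walk u1 v}
    (hp : (Walk.cons r p').IsPath) (he : s(u, y) ∈ (Walk.cons r p').edges) : y = u1 := by
  rw [edges_cons, List.mem_cons] at he
  rcases he with he | he
  · rw [Sym2.eq_iff] at he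
    rcases he with ⟨-, h2⟩ | ⟨h1, h2⟩
    · exact h2
    · exact absurd h1 r.ne
  · exfalso
    have : u ∈ p'.support := p'.fst_mem_support_of_mem_edges he
    rw [isPath_def, support_cons, List.nodup_cons] at hp
    exact hp.1 this

theorem induced_path_unique [Finite V] (hBG : IsBlockGraph G) {u v : V} (p : G.Walk u v) :
    ∀ q : G.Walk u v, p.IsPath → q.IsPath → WInduced p → WInduced q → p = q := by
  induction p with
  | nil =>
    intro q _ hq _ _
    exact (Walk.isPath_iff_eq_nil.mp hq).symm
  | @cons u u1 v r p' ih =>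
    intro q hp hq hip hiq
    cases q with
    | nil => exact absurd (Walk.isPath_iff_eq_nil.mp hp) (by simp)
    | @cons _ u1' _ r' q' =>
      have hup' : u ∉ p'.support := by
        rw [isPath_def, support_cons, List.nodup_cons] at hp
        exact hp.1
      have huq' : u ∉ q'.support := by
        rw [isPath_def, support_cons, List.nodup_cons] at hq
        exact hq.1
      by_cases h11 : u1 = u1'
      · subst h11
        have := ih q' hp.of_cons hq.of_cons (winduced_of_cons hp hip)
          (winduced_of_cons hq hiq)
        rw [this]
      · exfalso
        obtain ⟨t, ht, htq', hfirst⟩ := exists_first_meet p' {x | x ∈ q'.support}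
          ⟨v, end_mem_support p', end_mem_support q'⟩
        by_cases ht1 : t = u1
        · subst ht1
          have hmem : t ∈ (Walk.cons r' q').support := by
            rw [support_cons]
            exact List.mem_cons_of_mem _ htq'
          have he : s(u, t) ∈ (Walk.cons r' q').edges :=
            hiq u (start_mem_support _) t hmem r
          exact h11 (head_nbr hq he)
        · -- build the cycle
          set A := p'.takeUntil t ht with hAdef
          set B := q'.takeUntil t htq' with hBdef
          have hA : A.IsPath := hp.of_cons.takeUntil ht
          have hB : B.IsPath := hq.of_cons.takeUntil htq'
          have hAsub : A.support ⊆ p'.support := support_takeUntil_subset p' ht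
          have hBsub : B.support ⊆ q'.support := support_takeUntil_subset q' htq'
          have hmeet : ∀ x ∈ A.support, x ∈ B.reverse.support → x = t := by
            intro x hxA hxB
            rw [support_reverse, List.mem_reverse] at hxB
            exact hfirst x hxA (hBsub hxB)
          have hW1 : (A.append B.reverse).IsPath := isPath_append' hA hB.reverse hmeet
          set W1 := A.append B.reverse with hW1def
          have huW1 : u ∉ W1.support := by
            rw [hW1def, mem_support_append_iff]
            rintro (h | h)
            · exact hup' (hAsub h)
            · rw [support_reverse, List.mem_reverse] at h
              exact huq' (hBsub h)
          set cyc := Walk.cons r (W1.concat r'.symm) with hcycdef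
          have hsupcat : (W1.concat r'.symm).support = W1.support ++ [u] := by
            rw [support_concat]
          have hedgecat : (W1.concat r'.symm).edges = W1.edges ++ [s(u1', u)] := by
            rw [edges_concat, List.concat_eq_append]
          have hcyc : cyc.IsCycle := by
            constructor
            · constructor
              · constructor
                rw [hcycdef, edges_cons, hedgecat]
                rw [List.nodup_cons]
                constructor
                · rw [List.mem_append, List.mem_singleton]
                  rintro (h | h)
                  · exact huW1 (W1.fst_mem_support_of_mem_edges h)
                  · rw [Sym2.eq_iff] at h
                    rcases h with ⟨h1, h2⟩ | ⟨h1, h2⟩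
                    · exact r.ne h2.symm
                    · exact h11 h2
                · rw [List.nodup_append]
                  refine ⟨hW1.isTrail.edges_nodup, List.nodup_singleton _, ?_⟩
                  intro e he b hb
                  rw [List.mem_singleton] at hb
                  subst hb
                  rintro rfl
                  exact huW1 (W1.snd_mem_support_of_mem_edges he)
              · simp [hcycdef]
            · rw [hcycdef, support_cons, List.tail_cons, hsupcat]
              rw [List.nodup_append]
              exact ⟨hW1.support_nodup, List.nodup_singleton _,
                fun x hx b hb => by rw [List.mem_singleton] at hb; subst hb; rintro rfl; exact huW1 hx⟩
          have htW1 : t ∈ W1.support := by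
            rw [hW1def, mem_support_append_iff]
            exact Or.inl (end_mem_support A)
          have htcyc : t ∈ cyc.support := by
            rw [hcycdef, support_cons]
            refine List.mem_cons_of_mem _ ?_
            rw [hsupcat, List.mem_append]
            exact Or.inl htW1
          have hut : u ≠ t := fun h => hup' (h ▸ ht)
          have hadj : G.Adj u t := cycle_clique hBG cyc hcyc (start_mem_support _) htcyc hut
          have hmem : t ∈ (Walk.cons r p').support := by
            rw [support_cons]
            exact List.mem_cons_of_mem _ ht
          have he : s(u, t) ∈ (Walk.cons r p').edges :=
            hip u (start_mem_support _) t hmem hadj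
          exact ht1 (head_nbr hp he)

lemma inter_decomp [Finite V] (hBG : IsBlockGraph G) (Q R : InducedPath G)
    (hmeet : (Q.vertexSet ∩ R.vertexSet).Nonempty) :
    ∃ (c d : V) (q1 : G.Walk Q.first c) (g : G.Walk c d) (q2 : G.Walk d Q.last),
      Q.walk = q1.append (g.append q2) ∧
      {v : V | v ∈ g.support} = Q.vertexSet ∩ R.vertexSet ∧
      {e : Sym2 V | e ∈ g.edges} = Q.edgeSet ∩ R.edgeSet := by
  classical
  set S : Set V := Q.vertexSet ∩ R.vertexSet with hSdef
  have hmemS : ∀ x, x ∈ S ↔ (x ∈ Q.walk.support ∧ x ∈ R.walk.support) := fun x => Iff.rfl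
  obtain ⟨z, hz⟩ := hmeet
  obtain ⟨c, hc, hcS, hfirst⟩ := exists_first_meet Q.walk S ⟨z, hz.1, hz⟩
  set q1 := Q.walk.takeUntil c hc with hq1def
  set rest := Q.walk.dropUntil c hc with hrestdef
  have hrestp : rest.IsPath := Q.isPath.dropUntil hc
  obtain ⟨d, hd, hdS, hlast⟩ := exists_last_meet rest S hrestp.support_nodup
    ⟨c, start_mem_support rest, hcS⟩
  set g := rest.takeUntil d hd with hgdef
  set q2 := rest.dropUntil d hd with hq2def
  have hrest_eq : g.append q2 = rest := rest.take_spec hd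
  have hQeq : Q.walk = q1.append (g.append q2) := by
    rw [hrest_eq, hq1def, hrestdef, Q.walk.take_spec hc]
  have hQp : Q.walk.IsPath := Q.isPath
  -- g is an induced path
  have hgp : g.IsPath := hrestp.takeUntil hd
  have hrestInd : WInduced rest := by
    have := Q.induced
    have h1 : WInduced (q1.append rest) := by
      rw [hq1def, hrestdef, Q.walk.take_spec hc]
      exact Q.induced
    exact winduced_append_right (by rw [hq1def, hrestdef, Q.walk.take_spec hc]; exact hQp) h1
  have hgInd : WInduced g := by
    refine winduced_append_left (w1 := g) (w2 := q2) ?_ ?_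
    · rw [hrest_eq]; exact hrestp
    · rw [hrest_eq]; exact hrestInd
  -- the corresponding segment of R
  have hcR : c ∈ R.walk.support := hcS.2
  have hdR : d ∈ R.walk.support := hdS.2
  have hRp : R.walk.IsPath := R.isPath
  have hRInd : WInduced R.walk := R.induced
  -- build a segment of R from c to d (as an induced path)
  obtain ⟨hseg, hsegp, hsegInd, hsegSup, hsegEdge⟩ :
      ∃ hseg : G.Walk c d, hseg.IsPath ∧ WInduced hseg ∧
        (∀ x ∈ hseg.support, x ∈ R.walk.support) ∧
        (∀ e ∈ hseg.edges, e ∈ R.walk.edges) := by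
    rcases mem_dropUntil_total hRp.support_nodup hcR hdR with hcase | hcase
    · -- c comes after d on R; reverse the segment
      refine ⟨((R.walk.dropUntil d hdR).takeUntil c hcase).reverse,
        ((hRp.dropUntil hdR).takeUntil hcase).reverse, ?_, ?_, ?_⟩
      · apply winduced_reverse
        have hInd1 : WInduced (R.walk.dropUntil d hdR) := by
          have h1 : WInduced ((R.walk.takeUntil d hdR).append (R.walk.dropUntil d hdR)) := by
            rw [R.walk.take_spec hdR]; exact hRInd
          exact winduced_append_right (by rw [R.walk.take_spec hdR]; exact hRp) h1
        refine winduced_append_left (w2 := (R.walk.dropUntil d hdR).dropUntil c hcase) ?_ ?_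
        · rw [(R.walk.dropUntil d hdR).take_spec hcase]; exact hRp.dropUntil hdR
        · rw [(R.walk.dropUntil d hdR).take_spec hcase]; exact hInd1
      · intro x hx
        rw [support_reverse, List.mem_reverse] at hx
        exact support_dropUntil_subset R.walk hdR (support_takeUntil_subset _ hcase hx)
      · intro e he
        rw [edges_reverse, List.mem_reverse] at he
        exact edges_dropUntil_subset R.walk hdR (edges_takeUntil_subset _ hcase he)
    · -- d comes after c on R
      refine ⟨(R.walk.dropUntil c hcR).takeUntil d hcase,
        (hRp.dropUntil hcR).takeUntil hcase, ?_, ?_, ?_⟩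
      · have hInd1 : WInduced (R.walk.dropUntil c hcR) := by
          have h1 : WInduced ((R.walk.takeUntil c hcR).append (R.walk.dropUntil c hcR)) := by
            rw [R.walk.take_spec hcR]; exact hRInd
          exact winduced_append_right (by rw [R.walk.take_spec hcR]; exact hRp) h1
        refine winduced_append_left (w2 := (R.walk.dropUntil c hcR).dropUntil d hcase) ?_ ?_
        · rw [(R.walk.dropUntil c hcR).take_spec hcase]; exact hRp.dropUntil hcR
        · rw [(R.walk.dropUntil c hcR).take_spec hcase]; exact hInd1
      · intro x hx
        exact support_dropUntil_subset R.walk hcR (support_takeUntil_subset _ hcase hx)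
      · intro e he
        exact edges_dropUntil_subset R.walk hcR (edges_takeUntil_subset _ hcase he)
  have hg_eq : g = hseg := induced_path_unique hBG g hseg hgp hsegp hgInd hsegInd
  -- subsets
  have hgsubQ : ∀ x ∈ g.support, x ∈ Q.walk.support := fun x hx =>
    support_dropUntil_subset Q.walk hc (support_takeUntil_subset rest hd hx)
  have hgedgeQ : ∀ e ∈ g.edges, e ∈ Q.walk.edges := fun e he =>
    edges_dropUntil_subset Q.walk hc (edges_takeUntil_subset rest hd he)
  refine ⟨c, d, q1, g, q2, hQeq, ?_, ?_⟩
  · ext x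
    simp only [Set.mem_setOf_eq]
    constructor
    · intro hx
      exact ⟨hgsubQ x hx, hsegSup x (hg_eq ▸ hx)⟩
    · intro hx
      have hxQ : x ∈ Q.walk.support := hx.1
      rw [hQeq, mem_support_append_iff] at hxQ
      rcases hxQ with hx1 | hx1
      · have : x = c := hfirst x hx1 hx
        rw [this]
        exact start_mem_support g
      · rw [mem_support_append_iff] at hx1
        rcases hx1 with hx2 | hx2
        · exact hx2
        · have : x = d := hlast x hx2 hx
          rw [this]
          exact end_mem_support g
  · ext e
    simp only [Set.mem_setOf_eq]
    constructor
    · intro he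
      exact ⟨hgedgeQ e he, hsegEdge e (hg_eq ▸ he)⟩
    · intro he
      induction e with
      | _ x y =>
        have hadj : G.Adj x y := Q.walk.adj_of_mem_edges he.1
        have hxS : x ∈ S := ⟨Q.walk.fst_mem_support_of_mem_edges he.1,
          R.walk.fst_mem_support_of_mem_edges he.2⟩
        have hyS : y ∈ S := ⟨Q.walk.snd_mem_support_of_mem_edges he.1,
          R.walk.snd_mem_support_of_mem_edges he.2⟩
        have heQ : s(x, y) ∈ Q.walk.edges := he.1
        rw [hQeq, edges_append, List.mem_append] at heQ
        rcases heQ with he1 | he1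
        · exfalso
          have hx1 : x = c := hfirst x (q1.fst_mem_support_of_mem_edges he1) hxS
          have hy1 : y = c := hfirst y (q1.snd_mem_support_of_mem_edges he1) hyS
          exact hadj.ne (hx1.trans hy1.symm)
        · rw [edges_append, List.mem_append] at he1
          rcases he1 with he2 | he2
          · exact he2
          · exfalso
            have hx1 : x = d := hlast x (q2.fst_mem_support_of_mem_edges he2) hxS
            have hy1 : y = d := hlast y (q2.snd_mem_support_of_mem_edges he2) hyS
            exact hadj.ne (hx1.trans hy1.symm)

lemma decomp_unique {a b : V} {Q : G.Walk a b} (hQp : Q.IsPath) {S : Set V}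
    {c₁ d₁ : V} {q11 : G.Walk a c₁} {g1 : G.Walk c₁ d₁} {q21 : G.Walk d₁ b}
    (h₁ : Q = q11.append (g1.append q21)) (hs₁ : {v : V | v ∈ g1.support} = S)
    {c₂ d₂ : V} {q12 : G.Walk a c₂} {g2 : G.Walk c₂ d₂} {q22 : G.Walk d₂ b}
    (h₂ : Q = q12.append (g2.append q22)) (hs₂ : {v : V | v ∈ g2.support} = S) :
    c₁ = c₂ ∧ d₁ = d₂ ∧ HEq q11 q12 ∧ HEq g1 g2 ∧ HEq q21 q22 := by
  classical
  obtain ⟨hc₁, hq11, hrest₁⟩ := eq_takeUntil_of_append hQp.support_nodup _ _ h₁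
  obtain ⟨hc₂, hq12, hrest₂⟩ := eq_takeUntil_of_append hQp.support_nodup _ _ h₂
  have h₁' : Q = (q11.append g1).append q21 := by rw [h₁, ← append_assoc]
  have h₂' : Q = (q12.append g2).append q22 := by rw [h₂, ← append_assoc]
  obtain ⟨hd₁, htake₁, hq21⟩ := eq_takeUntil_of_append hQp.support_nodup _ _ h₁'
  obtain ⟨hd₂, htake₂, hq22⟩ := eq_takeUntil_of_append hQp.support_nodup _ _ h₂'
  -- c₁ ∈ S and c₂ ∈ S
  have hc₁S : c₁ ∈ S := hs₁ ▸ (start_mem_support g1)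
  have hc₂S : c₂ ∈ S := hs₂ ▸ (start_mem_support g2)
  have hd₁S : d₁ ∈ S := hs₁ ▸ (end_mem_support g1)
  have hd₂S : d₂ ∈ S := hs₂ ▸ (end_mem_support g2)
  have hSsub₁ : S ⊆ {v : V | v ∈ (Q.dropUntil c₁ hc₁).support} := by
    rw [← hs₁, ← hrest₁]
    intro x hx
    rw [Set.mem_setOf_eq] at hx ⊢
    rw [mem_support_append_iff]
    exact Or.inl hx
  have hSsub₂ : S ⊆ {v : V | v ∈ (Q.dropUntil c₂ hc₂).support} := by
    rw [← hs₂, ← hrest₂]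
    intro x hx
    rw [Set.mem_setOf_eq] at hx ⊢
    rw [mem_support_append_iff]
    exact Or.inl hx
  have hSsub₁' : S ⊆ {v : V | v ∈ (Q.takeUntil d₁ hd₁).support} := by
    rw [← hs₁, ← htake₁]
    intro x hx
    rw [Set.mem_setOf_eq] at hx ⊢
    rw [mem_support_append_iff]
    exact Or.inr hx
  have hSsub₂' : S ⊆ {v : V | v ∈ (Q.takeUntil d₂ hd₂).support} := by
    rw [← hs₂, ← htake₂]
    intro x hx
    rw [Set.mem_setOf_eq] at hx ⊢
    rw [mem_support_append_iff]
    exact Or.inr hx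
  have hcc : c₁ = c₂ :=
    dropUntil_antisymm hQp (hx := hc₁) (hy := hc₂) (hSsub₂ hc₁S) (hSsub₁ hc₂S)
  have hdd : d₁ = d₂ :=
    takeUntil_antisymm hQp (hx := hd₁) (hy := hd₂) (hSsub₂' hd₁S) (hSsub₁' hd₂S)
  subst hcc
  subst hdd
  have hq1eq : q11 = q12 := by rw [hq11, hq12]
  have hresteq : g1.append q21 = g2.append q22 := by rw [hrest₁, hrest₂]
  have hrestp : (g1.append q21).IsPath := by
    rw [hrest₁]; exact hQp.dropUntil hc₁
  obtain ⟨hd1', hg1', hq21'⟩ := eq_takeUntil_of_append hrestp.support_nodup g1 q21 rfl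
  obtain ⟨hd2', hg2', hq22'⟩ := eq_takeUntil_of_append hrestp.support_nodup g2 q22 hresteq
  have hgeq : g1 = g2 := by rw [hg1', hg2']
  have hq2eq : q21 = q22 := by rw [hq21', hq22']
  exact ⟨rfl, rfl, heq_of_eq hq1eq, heq_of_eq hgeq, heq_of_eq hq2eq⟩

end AuxProof

/-- **Theorem (Statement 6).** If two induced paths `Q` and `R` of a finite simple
block graph intersect non-trivially, then `Q ∩ R` is connected, and there are unique
decompositions `Q = Q₁ * γ * Q₂` and `R = R₁ * γ * R₂` where `γ = Q ∩ R`. -/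
theorem blockGraph_inducedPaths_inter_decomposition {V : Type*} [Fintype V] [DecidableEq V]
    {G : SimpleGraph V} (hBG : IsBlockGraph G) (Q R : InducedPath G)
    (hmeet : (Q.vertexSet ∩ R.vertexSet).Nonempty) :
    (pathsInter Q R).coe.Connected ∧
    ∃ (c d : V) (q1 : G.Walk Q.first c) (g : G.Walk c d) (q2 : G.Walk d Q.last)
      (c' d' : V) (r1 : G.Walk R.first c') (g' : G.Walk c' d') (r2 : G.Walk d' R.last),
      Q.walk = q1.append (g.append q2) ∧
      R.walk = r1.append (g'.append r2) ∧
      {v : V | v ∈ g.support} = Q.vertexSet ∩ R.vertexSet ∧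
      {e : Sym2 V | e ∈ g.edges} = Q.edgeSet ∩ R.edgeSet ∧
      {v : V | v ∈ g'.support} = Q.vertexSet ∩ R.vertexSet ∧
      {e : Sym2 V | e ∈ g'.edges} = Q.edgeSet ∩ R.edgeSet ∧
      (∀ (c₂ d₂ : V) (q1₂ : G.Walk Q.first c₂) (g₂ : G.Walk c₂ d₂) (q2₂ : G.Walk d₂ Q.last),
        Q.walk = q1₂.append (g₂.append q2₂) →
        {v : V | v ∈ g₂.support} = Q.vertexSet ∩ R.vertexSet →
        {e : Sym2 V | e ∈ g₂.edges} = Q.edgeSet ∩ R.edgeSet →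
        c₂ = c ∧ d₂ = d ∧ HEq q1₂ q1 ∧ HEq g₂ g ∧ HEq q2₂ q2) ∧
      (∀ (c₂ d₂ : V) (r1₂ : G.Walk R.first c₂) (g₂ : G.Walk c₂ d₂) (r2₂ : G.Walk d₂ R.last),
        R.walk = r1₂.append (g₂.append r2₂) →
        {v : V | v ∈ g₂.support} = Q.vertexSet ∩ R.vertexSet →
        {e : Sym2 V | e ∈ g₂.edges} = Q.edgeSet ∩ R.edgeSet →
        c₂ = c' ∧ d₂ = d' ∧ HEq r1₂ r1 ∧ HEq g₂ g' ∧ HEq r2₂ r2) := by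
  classical
  have : Finite V := inferInstance
  obtain ⟨c, d, q1, g, q2, hQeq, hgsup, hgedge⟩ := inter_decomp hBG Q R hmeet
  obtain ⟨c', d', r1, g', r2, hReq, hgsup', hgedge'⟩ := inter_decomp hBG R Q
    (by rwa [Set.inter_comm])
  rw [Set.inter_comm R.vertexSet Q.vertexSet] at hgsup'
  rw [Set.inter_comm R.edgeSet Q.edgeSet] at hgedge'
  constructor
  · -- connectivity of the intersection
    have hverts : g.toSubgraph.verts = (pathsInter Q R).verts := by
      rw [Walk.verts_toSubgraph, hgsup]
      rfl
    have hle : g.toSubgraph ≤ pathsInter Q R := by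
      constructor
      · rw [hverts]
      · intro x y hxy
        have he : s(x, y) ∈ g.edges := by
          rwa [← SimpleGraph.Subgraph.mem_edgeSet, Walk.mem_edges_toSubgraph] at hxy
        have he' : s(x, y) ∈ Q.edgeSet ∩ R.edgeSet := by
          rw [← hgedge]
          exact he
        exact ⟨Q.walk.adj_of_mem_edges he'.1, he'.1, he'.2⟩
    exact ((g.toSubgraph_connected).mono hle hverts).coe
  · refine ⟨c, d, q1, g, q2, c', d', r1, g', r2, hQeq, hReq, hgsup, hgedge,
      hgsup', hgedge', ?_, ?_⟩
    · intro c₂ d₂ q1₂ g₂ q2₂ hQ₂ hsup₂ _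
      exact decomp_unique Q.isPath hQ₂ hsup₂ hQeq hgsup
    · intro c₂ d₂ r1₂ g₂ r2₂ hR₂ hsup₂ _
      exact decomp_unique R.isPath hR₂ hsup₂ hReq hgsup'
end

section
/- Let P_1,…,P_ℓ be vertex-disjoint induced paths of a finite simple block graph G, each equipped with an orientation φ_i, and let i ≠ j. Then K_{P_ind} contains the arc (i,j) if and only if P_ind contains a strand from P_i to P_j. -/
open SimpleGraph

namespace BGaux

set_option linter.unusedSectionVars false

variable {V : Type*} [DecidableEq V] {G : SimpleGraph V}

open SimpleGraph.Walk

lemma dropUntil_cons_ne {v x w u : V} (r : G.Adj v x) (p : G.Walk x w) (hvu : v ≠ u)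
    (h : u ∈ (Walk.cons r p).support) (h' : u ∈ p.support) :
    (Walk.cons r p).dropUntil u h = p.dropUntil u h' := by
  simp [Walk.dropUntil, hvu]

lemma takeUntil_cons_ne {v x w u : V} (r : G.Adj v x) (p : G.Walk x w) (hvu : v ≠ u)
    (h : u ∈ (Walk.cons r p).support) (h' : u ∈ p.support) :
    (Walk.cons r p).takeUntil u h = Walk.cons r (p.takeUntil u h') := by
  simp [Walk.takeUntil, hvu]

lemma dropUntil_cons_self {v x w : V} (r : G.Adj v x) (p : G.Walk x w)
    (h : v ∈ (Walk.cons r p).support) :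
    (Walk.cons r p).dropUntil v h = Walk.cons r p := by
  simp [Walk.dropUntil]

lemma support_takeUntil_cons_self {v x w : V} (r : G.Adj v x) (p : G.Walk x w)
    (h : v ∈ (Walk.cons r p).support) :
    ((Walk.cons r p).takeUntil v h).support = [v] := by
  simp [Walk.takeUntil]

lemma mem_of_mem_support_cons {a b c y : V} (r : G.Adj a b) (q : G.Walk b c)
    (h : y ∈ (Walk.cons r q).support) (hy : y ≠ a) : y ∈ q.support := by
  rw [Walk.support_cons, List.mem_cons] at h
  rcases h with h | h
  · exact absurd h hy
  · exact h

lemma length_dropUntil_lt {u v y : V} (p : G.Walk u v) (h : y ∈ p.support) (hy : y ≠ u) :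
    (p.dropUntil y h).length < p.length := by
  induction p with
  | nil =>
    rw [Walk.mem_support_nil_iff] at h
    exact absurd h hy
  | cons r q ih =>
    have h' := mem_of_mem_support_cons r q h hy
    rw [dropUntil_cons_ne r q (fun e => hy e.symm) h h']
    calc (q.dropUntil y h').length ≤ q.length := Walk.length_dropUntil_le q h'
    _ < (Walk.cons r q).length := by simp [Walk.length_cons]

lemma length_dropUntil_add_two_le {x v y : V} (p : G.Walk x v) (h : y ∈ p.support)
    (hyx : y ≠ x) (he : s(x, y) ∉ p.edges) :
    (p.dropUntil y h).length + 2 ≤ p.length := by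
  cases p with
  | nil =>
    rw [Walk.mem_support_nil_iff] at h
    exact absurd h hyx
  | cons r q =>
    rename_i z
    have h' := mem_of_mem_support_cons r q h hyx
    have hyz : y ≠ z := by
      rintro rfl
      exact he (by simp [Walk.edges_cons])
    rw [dropUntil_cons_ne r q (fun e => hyx e.symm) h h']
    have := length_dropUntil_lt q h' hyz
    simpa [Walk.length_cons] using Nat.succ_le_of_lt this

lemma mem_dropUntil_or {u v x y : V} (p : G.Walk u v) (hx : x ∈ p.support) (hy : y ∈ p.support) :
    y ∈ (p.dropUntil x hx).support ∨ x ∈ (p.dropUntil y hy).support := by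
  induction p with
  | nil =>
    rw [Walk.mem_support_nil_iff] at hx hy
    subst hx; subst hy
    left; exact Walk.start_mem_support _
  | cons r q ih =>
    rename_i a b c
    by_cases hxa : x = a
    · subst hxa
      rw [dropUntil_cons_self]
      left; exact hy
    by_cases hya : y = a
    · subst hya
      rw [dropUntil_cons_self]
      right; exact hx
    have hx' := mem_of_mem_support_cons r q hx hxa
    have hy' := mem_of_mem_support_cons r q hy hya
    rw [dropUntil_cons_ne r q (fun e => hxa e.symm) hx hx',
        dropUntil_cons_ne r q (fun e => hya e.symm) hy hy']
    exact ih hx' hy'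

lemma eq_of_mem_take_drop {u v x y : V} (p : G.Walk u v) (hp : p.IsPath) (hx : x ∈ p.support)
    (h1 : y ∈ (p.takeUntil x hx).support) (h2 : y ∈ (p.dropUntil x hx).support) : y = x := by
  have hnd : p.support.Nodup := hp.support_nodup
  rw [← p.take_spec hx, Walk.support_append, List.nodup_append] at hnd
  have hdisj := hnd.2.2
  rw [Walk.support_eq_cons (p.dropUntil x hx), List.mem_cons] at h2
  rcases h2 with h2 | h2
  · exact h2
  · exact (hdisj _ h1 _ h2 rfl).elim

lemma support_eq_single {u v : V} (p : G.Walk u v) (hp : p.IsPath) (h : u = v) :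
    ∀ x ∈ p.support, x = u := by
  subst h
  cases p with
  | nil => simp
  | cons r q =>
    exfalso
    rw [Walk.cons_isPath_iff] at hp
    exact hp.2 (q.end_mem_support)

lemma length_pos_of_ne {u v : V} (p : G.Walk u v) (h : u ≠ v) : 0 < p.length := by
  cases p with
  | nil => exact absurd rfl h
  | cons r q => simp [Walk.length_cons]

lemma ends_edge_support {u v : V} (p : G.Walk u v) (hp : p.IsPath) (he : s(u, v) ∈ p.edges) :
    ∀ x ∈ p.support, x = u ∨ x = v := by
  cases p with
  | nil => simp at he
  | cons r q =>
    rename_i z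
    rw [Walk.edges_cons, List.mem_cons] at he
    rw [Walk.cons_isPath_iff] at hp
    rcases he with he | he
    · have hz : z = v := by
        rw [Sym2.eq_iff] at he
        rcases he with ⟨-, h⟩ | ⟨h1, h2⟩
        · exact h.symm
        · exact absurd h1 r.ne
      subst hz
      intro x hx
      rw [Walk.support_cons, List.mem_cons] at hx
      rcases hx with h1 | h1
      · exact Or.inl h1
      · exact Or.inr (support_eq_single q hp.1 rfl x h1)
    · exfalso
      exact hp.2 (q.fst_mem_support_of_mem_edges he)

lemma support_of_length_eq_zero {u v : V} (p : G.Walk u v) (h : p.length = 0) :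
    ∀ x ∈ p.support, x = u := by
  cases p with
  | nil => simp
  | cons r q => simp [Walk.length_cons] at h

end BGaux
namespace BGaux

set_option linter.unusedSectionVars false

variable {V : Type*} [DecidableEq V] {G : SimpleGraph V}

open SimpleGraph.Walk

lemma exists_last_hit {u v : V} (p : G.Walk u v) (hp : p.IsPath) (S : Set V)
    (hex : ∃ x ∈ p.support, x ∈ S) :
    ∃ a, ∃ ha : a ∈ p.support, a ∈ S ∧
      ∀ y ∈ (p.dropUntil a ha).support, y ∈ S → y = a := by
  classical
  induction p with
  | nil =>
    obtain ⟨x, hx, hxS⟩ := hex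
    rw [Walk.mem_support_nil_iff] at hx; subst hx
    refine ⟨x, Walk.start_mem_support _, hxS, ?_⟩
    intro y hy _
    have := Walk.support_dropUntil_subset _ (Walk.start_mem_support _) hy
    rw [Walk.mem_support_nil_iff] at this; exact this
  | cons r q ih =>
    rename_i a b c
    rw [Walk.cons_isPath_iff] at hp
    by_cases hq : ∃ y ∈ q.support, y ∈ S
    · obtain ⟨m, hm, hmS, hmax⟩ := ih hp.1 hq
      have hma : m ≠ a := fun e => hp.2 (e ▸ hm)
      have hm' : m ∈ (Walk.cons r q).support := by
        rw [Walk.support_cons, List.mem_cons]; exact Or.inr hm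
      refine ⟨m, hm', hmS, ?_⟩
      rw [dropUntil_cons_ne r q (fun e => hma e.symm) hm' hm]
      exact hmax
    · push_neg at hq
      obtain ⟨x, hx, hxS⟩ := hex
      have hxa : x = a := by
        by_contra hne
        exact hq x (mem_of_mem_support_cons r q hx hne) hxS
      subst hxa
      refine ⟨x, hx, hxS, ?_⟩
      rw [dropUntil_cons_self]
      intro y hy hyS
      rcases List.mem_cons.mp (Walk.support_cons r q ▸ hy) with h1 | h1
      · exact h1
      · exact absurd hyS (hq y h1)

lemma exists_first_hit {u v : V} (p : G.Walk u v) (S : Set V)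
    (hex : ∃ x ∈ p.support, x ∈ S) :
    ∃ b, ∃ hb : b ∈ p.support, b ∈ S ∧
      ∀ y ∈ (p.takeUntil b hb).support, y ∈ S → y = b := by
  classical
  induction p with
  | nil =>
    obtain ⟨x, hx, hxS⟩ := hex
    rw [Walk.mem_support_nil_iff] at hx; subst hx
    refine ⟨x, Walk.start_mem_support _, hxS, ?_⟩
    intro y hy _
    have := Walk.support_takeUntil_subset _ (Walk.start_mem_support _) hy
    rw [Walk.mem_support_nil_iff] at this; exact this
  | cons r q ih =>
    rename_i a b c
    by_cases haS : a ∈ S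
    · refine ⟨a, Walk.start_mem_support _, haS, ?_⟩
      intro y hy _
      rw [support_takeUntil_cons_self] at hy
      simpa using hy
    · have hq : ∃ y ∈ q.support, y ∈ S := by
        obtain ⟨x, hx, hxS⟩ := hex
        have hxa : x ≠ a := fun e => haS (e ▸ hxS)
        exact ⟨x, mem_of_mem_support_cons r q hx hxa, hxS⟩
      obtain ⟨m, hm, hmS, hmin⟩ := ih hq
      have hma : m ≠ a := fun e => haS (e ▸ hmS)
      have hm' : m ∈ (Walk.cons r q).support := by
        rw [Walk.support_cons, List.mem_cons]; exact Or.inr hm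
      refine ⟨m, hm', hmS, ?_⟩
      rw [takeUntil_cons_ne r q (fun e => hma e.symm) hm' hm]
      intro y hy hyS
      rcases List.mem_cons.mp (Walk.support_cons _ _ ▸ hy) with h1 | h1
      · exact absurd (h1 ▸ hyS) haS
      · exact hmin y h1 hyS

/-- Existence of an induced path inside a vertex set `W` once there is any walk inside `W`. -/
lemma exists_induced_path_in {u v : V} (W : Set V) (p0 : G.Walk u v)
    (h0 : ∀ x ∈ p0.support, x ∈ W) :
    ∃ R : InducedPath G, R.first = u ∧ R.last = v ∧ ∀ x ∈ R.walk.support, x ∈ W := by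
  classical
  set L : Set ℕ := {n | ∃ p : G.Walk u v, (∀ x ∈ p.support, x ∈ W) ∧ p.length = n} with hL
  have hne : L.Nonempty := ⟨p0.length, p0, h0, rfl⟩
  obtain ⟨p, hpW, hplen⟩ := Nat.sInf_mem hne
  have hqW : ∀ x ∈ p.bypass.support, x ∈ W := fun x hx => hpW x (p.support_bypass_subset hx)
  have hqmin : ∀ p' : G.Walk u v, (∀ x ∈ p'.support, x ∈ W) → p.bypass.length ≤ p'.length := by
    intro p' h'
    have h1 : sInf L ≤ p'.length := Nat.sInf_le ⟨p', h', rfl⟩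
    calc p.bypass.length ≤ p.length := Walk.length_bypass_le p
    _ = sInf L := hplen
    _ ≤ p'.length := h1
  have hqpath : p.bypass.IsPath := Walk.bypass_isPath p
  have key : ∀ x y (hx : x ∈ p.bypass.support), y ∈ p.bypass.support → G.Adj x y →
      s(x, y) ∉ p.bypass.edges → y ∈ (p.bypass.dropUntil x hx).support → False := by
    intro x y hx _ hadj hne' hyd
    set q := p.bypass with hq
    set d := q.dropUntil x hx with hd
    have hyx : y ≠ x := fun e => G.ne_of_adj hadj e.symm
    have hed : s(x, y) ∉ d.edges := fun hmem => hne' (Walk.edges_dropUntil_subset _ _ hmem)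
    have hlen2 := length_dropUntil_add_two_le d hyd hyx hed
    set p' : G.Walk u v :=
      (q.takeUntil x hx).append (Walk.cons hadj (d.dropUntil y hyd)) with hp'
    have hp'W : ∀ z ∈ p'.support, z ∈ W := by
      intro z hz
      rw [hp', Walk.mem_support_append_iff] at hz
      rcases hz with hz | hz
      · exact hqW z (Walk.support_takeUntil_subset _ _ hz)
      · rcases List.mem_cons.mp (Walk.support_cons _ _ ▸ hz) with h1 | h1
        · subst h1; exact hqW z hx
        · exact hqW z (Walk.support_dropUntil_subset _ _
            (Walk.support_dropUntil_subset _ _ h1))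
    have hlen : p'.length < q.length := by
      have hsplit : (q.takeUntil x hx).length + d.length = q.length := by
        conv_rhs => rw [← q.take_spec hx]
        rw [Walk.length_append]
      rw [hp', Walk.length_append, Walk.length_cons]
      omega
    exact absurd (hqmin p' hp'W) (by omega)
  refine ⟨⟨u, v, p.bypass, hqpath, ?_⟩, rfl, rfl, hqW⟩
  intro x hx y hy hadj
  by_contra hne'
  rcases mem_dropUntil_or p.bypass hx hy with hcase | hcase
  · exact key x y hx hy hadj hne' hcase
  · refine key y x hy hx hadj.symm ?_ hcase
    rw [Sym2.eq_swap]; exact hne'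

end BGaux
namespace BGaux

set_option linter.unusedSectionVars false

variable {V : Type*} [DecidableEq V] {G : SimpleGraph V}

open SimpleGraph.Walk

/-- An edge of a path which has both endpoints in the support of the left factor of an
append decomposition is an edge of the left factor. -/
lemma edge_mem_left {u v w a b : V} (p : G.Walk u v) (q : G.Walk v w)
    (hpq : (p.append q).IsPath) (he : s(a, b) ∈ (p.append q).edges)
    (ha : a ∈ p.support) (hb : b ∈ p.support) : s(a, b) ∈ p.edges := by
  rw [Walk.edges_append, List.mem_append] at he
  rcases he with he | he
  · exact he
  · exfalso
    have hnd : (p.append q).support.Nodup := hpq.support_nodup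
    rw [Walk.support_append, List.nodup_append] at hnd
    have hdisj := hnd.2.2
    have haq : a ∈ q.support := q.fst_mem_support_of_mem_edges he
    have hbq : b ∈ q.support := q.snd_mem_support_of_mem_edges he
    have hav : a = v := by
      rw [Walk.support_eq_cons q, List.mem_cons] at haq
      rcases haq with h | h
      · exact h
      · exact (hdisj _ ha _ h rfl).elim
    have hbv : b = v := by
      rw [Walk.support_eq_cons q, List.mem_cons] at hbq
      rcases hbq with h | h
      · exact h
      · exact (hdisj _ hb _ h rfl).elim
    exact (q.adj_of_mem_edges he).ne (hav.trans hbv.symm)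

lemma edge_mem_right {u v w a b : V} (p : G.Walk u v) (q : G.Walk v w)
    (hpq : (p.append q).IsPath) (he : s(a, b) ∈ (p.append q).edges)
    (ha : a ∈ q.support) (hb : b ∈ q.support) : s(a, b) ∈ q.edges := by
  rw [Walk.edges_append, List.mem_append] at he
  rcases he with he | he
  · exfalso
    have hnd : (p.append q).support.Nodup := hpq.support_nodup
    rw [Walk.support_append, List.nodup_append] at hnd
    have hdisj := hnd.2.2
    have hap : a ∈ p.support := p.fst_mem_support_of_mem_edges he
    have hbp : b ∈ p.support := p.snd_mem_support_of_mem_edges he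
    have hav : a = v := by
      rw [Walk.support_eq_cons q, List.mem_cons] at ha
      rcases ha with h | h
      · exact h
      · exact (hdisj _ hap _ h rfl).elim
    have hbv : b = v := by
      rw [Walk.support_eq_cons q, List.mem_cons] at hb
      rcases hb with h | h
      · exact h
      · exact (hdisj _ hbp _ h rfl).elim
    exact (p.adj_of_mem_edges he).ne (hav.trans hbv.symm)
  · exact he

/-- The initial segment of an induced path, as an induced path. -/
def IPtake (P : InducedPath G) (x : V) (hx : x ∈ P.walk.support) : InducedPath G where
  first := P.first
  last := x
  walk := P.walk.takeUntil x hx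
  isPath := P.isPath.takeUntil hx
  induced := by
    intro a ha b hb hadj
    have hpath : ((P.walk.takeUntil x hx).append (P.walk.dropUntil x hx)).IsPath := by
      rw [P.walk.take_spec hx]; exact P.isPath
    have he : s(a, b) ∈ P.walk.edges :=
      P.induced a (P.walk.support_takeUntil_subset hx ha)
        b (P.walk.support_takeUntil_subset hx hb) hadj
    refine edge_mem_left _ _ hpath ?_ ha hb
    rw [P.walk.take_spec hx]; exact he

/-- The final segment of an induced path, as an induced path. -/
def IPdrop (P : InducedPath G) (x : V) (hx : x ∈ P.walk.support) : InducedPath G where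
  first := x
  last := P.last
  walk := P.walk.dropUntil x hx
  isPath := P.isPath.dropUntil hx
  induced := by
    intro a ha b hb hadj
    have hpath : ((P.walk.takeUntil x hx).append (P.walk.dropUntil x hx)).IsPath := by
      rw [P.walk.take_spec hx]; exact P.isPath
    have he : s(a, b) ∈ P.walk.edges :=
      P.induced a (P.walk.support_dropUntil_subset hx ha)
        b (P.walk.support_dropUntil_subset hx hb) hadj
    refine edge_mem_right _ _ hpath ?_ ha hb
    rw [P.walk.take_spec hx]; exact he

/-- The reversal of an induced path. -/
def IPrev (P : InducedPath G) : InducedPath G where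
  first := P.last
  last := P.first
  walk := P.walk.reverse
  isPath := P.isPath.reverse
  induced := by
    intro a ha b hb hadj
    rw [Walk.support_reverse, List.mem_reverse] at ha hb
    rw [Walk.edges_reverse, List.mem_reverse]
    exact P.induced a ha b hb hadj

lemma pathContains_of_verts (Q P : InducedPath G)
    (h : P.vertexSet ⊆ Q.vertexSet) : PathContains G Q P := by
  refine ⟨h, ?_⟩
  intro e he
  induction e with
  | _ a b =>
    have hadj : G.Adj a b := P.walk.adj_of_mem_edges he
    have ha : a ∈ P.vertexSet := P.walk.fst_mem_support_of_mem_edges he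
    have hb : b ∈ P.vertexSet := P.walk.snd_mem_support_of_mem_edges he
    exact Q.induced a (h ha) b (h hb) hadj

lemma range_fin2 (f : Fin 2 → V) : Set.range f = {f 0, f 1} := by
  ext x
  constructor
  · rintro ⟨t, rfl⟩
    fin_cases t
    · exact Or.inl rfl
    · exact Or.inr rfl
  · rintro (rfl | rfl)
    · exact ⟨0, rfl⟩
    · exact ⟨1, rfl⟩

lemma pair_eq_cases {a b c d : V} (h : ({a, b} : Set V) = {c, d}) :
    (a = c ∧ b = d) ∨ (a = d ∧ b = c) := by
  have ha : a ∈ ({c, d} : Set V) := h ▸ (by simp : a ∈ ({a, b} : Set V))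
  have hb : b ∈ ({c, d} : Set V) := h ▸ (by simp : b ∈ ({a, b} : Set V))
  have hc : c ∈ ({a, b} : Set V) := h ▸ (by simp : c ∈ ({c, d} : Set V))
  have hd : d ∈ ({a, b} : Set V) := h.symm ▸ (by simp : d ∈ ({c, d} : Set V))
  rcases ha with rfl | rfl
  · rcases hb with rfl | rfl
    · left
      constructor
      · rfl
      · rcases hd with rfl | rfl <;> rfl
    · exact Or.inl ⟨rfl, rfl⟩
  · rcases hb with rfl | rfl
    · exact Or.inr ⟨rfl, rfl⟩
    · right
      constructor
      · rfl
      · rcases hc with rfl | rfl <;> rfl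

lemma boundary_subset_vertexSet (P : InducedPath G) : P.boundary ⊆ P.vertexSet := by
  rintro x (rfl | rfl)
  · exact P.walk.start_mem_support
  · exact P.walk.end_mem_support

end BGaux
namespace BGaux

set_option linter.unusedSectionVars false

variable {V : Type*} [DecidableEq V] {G : SimpleGraph V}

open SimpleGraph.Walk

lemma toSubgraph_adj_edges {u v a b : V} (p : G.Walk u v) :
    p.toSubgraph.Adj a b ↔ s(a, b) ∈ p.edges := by
  rw [← Subgraph.mem_edgeSet, Walk.mem_edges_toSubgraph]

lemma subgraph_finite [Fintype V] : Finite (G.Subgraph) := by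
  exact Finite.of_injective (fun H : G.Subgraph => (H.verts, H.Adj))
    (by intro H K h; rw [Prod.mk.injEq] at h; exact SimpleGraph.Subgraph.ext h.1 h.2)

lemma exists_block_above [Fintype V] {H : G.Subgraph} (h : SubgraphBiconnected H) :
    ∃ B : G.Subgraph, IsBlock B ∧ H ≤ B := by
  have : Finite (G.Subgraph) := subgraph_finite
  obtain ⟨B, hBmem, hBmax⟩ := Set.Finite.exists_maximalFor id
    {H' : G.Subgraph | SubgraphBiconnected H' ∧ H ≤ H'} (Set.toFinite _) ⟨H, h, le_rfl⟩
  exact ⟨B, ⟨hBmem.1, fun H' hH' hle => le_antisymm (hBmax ⟨hH', hBmem.2.trans hle⟩ hle) hle⟩, hBmem.2⟩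

lemma conn_of_le {K H' : G.Subgraph} (hK : K.Connected) (hle : K ≤ H')
    (hv : K.verts = H'.verts) : H'.coe.Connected :=
  (hK.mono hle hv).coe

/-- Generic criterion for connectivity after deleting a vertex. -/
lemma conn_del_of_pieces (H : G.Subgraph) (w : V) (K : G.Subgraph) (hK : K.Connected)
    (hle1 : K.verts ⊆ H.verts) (hw : w ∉ K.verts) (hadj : ∀ x y, K.Adj x y → H.Adj x y)
    (hcover : ∀ x ∈ H.verts, x ≠ w → x ∈ K.verts) :
    ((H.deleteVerts {w}).coe).Connected := by
  refine conn_of_le hK ⟨?_, ?_⟩ ?_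
  · intro x hx
    refine ⟨hle1 hx, ?_⟩
    simp only [Set.mem_singleton_iff]
    rintro rfl
    exact hw hx
  · intro x y hxy
    rw [Subgraph.deleteVerts_adj]
    refine ⟨hle1 (K.edge_vert hxy), ?_, hle1 (K.edge_vert hxy.symm), ?_, hadj _ _ hxy⟩
    · simp only [Set.mem_singleton_iff]
      rintro rfl
      exact hw (K.edge_vert hxy)
    · simp only [Set.mem_singleton_iff]
      rintro rfl
      exact hw (K.edge_vert hxy.symm)
  · ext x
    rw [Subgraph.deleteVerts_verts]
    constructor
    · intro hx
      refine ⟨hle1 hx, ?_⟩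
      simp only [Set.mem_singleton_iff]
      rintro rfl
      exact hw hx
    · rintro ⟨hx, hxw⟩
      exact hcover x hx (by simpa using hxw)

lemma mem_verts_sup_toSubgraph {u v u' v' x : V} (p : G.Walk u v) (q : G.Walk u' v') :
    x ∈ (p.toSubgraph ⊔ q.toSubgraph).verts ↔ x ∈ p.support ∨ x ∈ q.support := by
  rw [Subgraph.verts_sup]
  simp [Walk.mem_verts_toSubgraph]

lemma del_first {u v : V} (A B : G.Walk u v) (hA : A.IsPath) (hB : B.IsPath) (hne : u ≠ v) :
    (((A.toSubgraph ⊔ B.toSubgraph)).deleteVerts {u}).coe.Connected := by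
  cases A with
  | nil => exact absurd rfl hne
  | cons rA A' =>
    cases B with
    | nil => exact absurd rfl hne
    | cons rB B' =>
      rw [Walk.cons_isPath_iff] at hA hB
      have huA : u ∉ A'.support := hA.2
      have huB : u ∉ B'.support := hB.2
      have hKconn : (A'.toSubgraph ⊔ B'.toSubgraph).Connected :=
        Subgraph.connected_sup A'.toSubgraph_connected.preconnected B'.toSubgraph_connected.preconnected
          ⟨v, by rw [Subgraph.verts_inf]
                 exact ⟨A'.end_mem_verts_toSubgraph, B'.end_mem_verts_toSubgraph⟩⟩
      refine conn_del_of_pieces _ u _ hKconn ?_ ?_ ?_ ?_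
      · intro x hx
        rw [mem_verts_sup_toSubgraph] at hx
        rw [mem_verts_sup_toSubgraph]
        rcases hx with h | h
        · exact Or.inl (by rw [Walk.support_cons]; exact List.mem_cons_of_mem _ h)
        · exact Or.inr (by rw [Walk.support_cons]; exact List.mem_cons_of_mem _ h)
      · rw [mem_verts_sup_toSubgraph]
        rintro (h | h)
        · exact huA h
        · exact huB h
      · intro x y hxy
        rw [Subgraph.sup_adj] at hxy ⊢
        rcases hxy with h | h
        · rw [toSubgraph_adj_edges] at h
          exact Or.inl ((toSubgraph_adj_edges _).mpr
            (by rw [Walk.edges_cons]; exact List.mem_cons_of_mem _ h))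
        · rw [toSubgraph_adj_edges] at h
          exact Or.inr ((toSubgraph_adj_edges _).mpr
            (by rw [Walk.edges_cons]; exact List.mem_cons_of_mem _ h))
      · intro x hx hxu
        rw [mem_verts_sup_toSubgraph] at hx
        rw [mem_verts_sup_toSubgraph]
        rcases hx with h | h
        · rw [Walk.support_cons, List.mem_cons] at h
          rcases h with rfl | h
          · exact absurd rfl hxu
          · exact Or.inl h
        · rw [Walk.support_cons, List.mem_cons] at h
          rcases h with rfl | h
          · exact absurd rfl hxu
          · exact Or.inr h

lemma del_internal {u v w : V} (A B : G.Walk u v) (hA : A.IsPath) (hB : B.IsPath)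
    (hw : w ∈ A.support) (hwu : w ≠ u) (hwv : w ≠ v) (hwB : w ∉ B.support) :
    (((A.toSubgraph ⊔ B.toSubgraph)).deleteVerts {w}).coe.Connected := by
  obtain ⟨x1, e1, C1, hC1⟩ := Walk.exists_eq_cons_of_ne hwu (A.takeUntil w hw).reverse
  obtain ⟨x2, e2, C2, hC2⟩ := Walk.exists_eq_cons_of_ne hwv (A.dropUntil w hw)
  have hwC1 : w ∉ C1.support := by
    have hp : (A.takeUntil w hw).reverse.IsPath := (hA.takeUntil hw).reverse
    rw [hC1, Walk.cons_isPath_iff] at hp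
    exact hp.2
  have hwC2 : w ∉ C2.support := by
    have hp : (A.dropUntil w hw).IsPath := hA.dropUntil hw
    rw [hC2, Walk.cons_isPath_iff] at hp
    exact hp.2
  have hsupp1 : ∀ y ∈ C1.support, y ∈ A.support := by
    intro y hy
    have : y ∈ (A.takeUntil w hw).reverse.support := by
      rw [hC1, Walk.support_cons]; exact List.mem_cons_of_mem _ hy
    rw [Walk.support_reverse, List.mem_reverse] at this
    exact A.support_takeUntil_subset hw this
  have hsupp2 : ∀ y ∈ C2.support, y ∈ A.support := by
    intro y hy
    have : y ∈ (A.dropUntil w hw).support := by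
      rw [hC2, Walk.support_cons]; exact List.mem_cons_of_mem _ hy
    exact A.support_dropUntil_subset hw this
  have hedges1 : ∀ e ∈ C1.edges, e ∈ A.edges := by
    intro e he
    have : e ∈ (A.takeUntil w hw).reverse.edges := by
      rw [hC1, Walk.edges_cons]; exact List.mem_cons_of_mem _ he
    rw [Walk.edges_reverse, List.mem_reverse] at this
    exact A.edges_takeUntil_subset hw this
  have hedges2 : ∀ e ∈ C2.edges, e ∈ A.edges := by
    intro e he
    have : e ∈ (A.dropUntil w hw).edges := by
      rw [hC2, Walk.edges_cons]; exact List.mem_cons_of_mem _ he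
    exact A.edges_dropUntil_subset hw this
  have hcover : ∀ y ∈ A.support, y ≠ w → y ∈ C1.support ∨ y ∈ C2.support := by
    intro y hy hyw
    rw [← A.take_spec hw, Walk.mem_support_append_iff] at hy
    rcases hy with hy | hy
    · left
      have : y ∈ (A.takeUntil w hw).reverse.support := by
        rw [Walk.support_reverse, List.mem_reverse]; exact hy
      rw [hC1, Walk.support_cons, List.mem_cons] at this
      rcases this with rfl | h
      · exact absurd rfl hyw
      · exact h
    · right
      rw [hC2, Walk.support_cons, List.mem_cons] at hy
      rcases hy with rfl | h
      · exact absurd rfl hyw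
      · exact h
  have hKconn : ((C1.toSubgraph ⊔ B.toSubgraph) ⊔ C2.toSubgraph).Connected := by
    refine Subgraph.connected_sup ?_ C2.toSubgraph_connected.preconnected ?_
    · refine (Subgraph.connected_sup C1.toSubgraph_connected.preconnected B.toSubgraph_connected.preconnected ?_).preconnected
      refine ⟨u, ?_⟩
      rw [Subgraph.verts_inf]
      exact ⟨C1.end_mem_verts_toSubgraph, B.start_mem_verts_toSubgraph⟩
    · refine ⟨v, ?_⟩
      rw [Subgraph.verts_inf]
      refine ⟨?_, C2.end_mem_verts_toSubgraph⟩
      rw [Subgraph.verts_sup]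
      exact Or.inr B.end_mem_verts_toSubgraph
  have hmemK : ∀ x, x ∈ ((C1.toSubgraph ⊔ B.toSubgraph) ⊔ C2.toSubgraph).verts ↔
      x ∈ C1.support ∨ x ∈ B.support ∨ x ∈ C2.support := by
    intro x
    rw [Subgraph.verts_sup, Subgraph.verts_sup]
    simp [Walk.mem_verts_toSubgraph, or_assoc]
  refine conn_del_of_pieces _ w _ hKconn ?_ ?_ ?_ ?_
  · intro x hx
    rw [hmemK] at hx
    rw [mem_verts_sup_toSubgraph]
    rcases hx with h | h | h
    · exact Or.inl (hsupp1 x h)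
    · exact Or.inr h
    · exact Or.inl (hsupp2 x h)
  · rw [hmemK]
    rintro (h | h | h)
    · exact hwC1 h
    · exact hwB h
    · exact hwC2 h
  · intro x y hxy
    rw [Subgraph.sup_adj, Subgraph.sup_adj] at hxy
    rw [Subgraph.sup_adj]
    rcases hxy with (h | h) | h
    · rw [toSubgraph_adj_edges] at h
      exact Or.inl ((toSubgraph_adj_edges _).mpr (hedges1 _ h))
    · exact Or.inr h
    · rw [toSubgraph_adj_edges] at h
      exact Or.inl ((toSubgraph_adj_edges _).mpr (hedges2 _ h))
  · intro x hx hxw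
    rw [mem_verts_sup_toSubgraph] at hx
    rw [hmemK]
    rcases hx with h | h
    · rcases hcover x h hxw with h1 | h1
      · exact Or.inl h1
      · exact Or.inr (Or.inr h1)
    · exact Or.inr (Or.inl h)

lemma cycle_adj [Fintype V] (hBG : IsBlockGraph G) {u v : V} (hne : u ≠ v)
    (A B : G.Walk u v) (hA : A.IsPath) (hB : B.IsPath)
    (hint : ∀ x, x ∈ A.support → x ∈ B.support → x = u ∨ x = v) : G.Adj u v := by
  have hconn : (A.toSubgraph ⊔ B.toSubgraph).Connected :=
    Subgraph.connected_sup A.toSubgraph_connected.preconnected B.toSubgraph_connected.preconnected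
      ⟨u, by rw [Subgraph.verts_inf]
             exact ⟨A.start_mem_verts_toSubgraph, B.start_mem_verts_toSubgraph⟩⟩
  have hbi : SubgraphBiconnected (A.toSubgraph ⊔ B.toSubgraph) := by
    refine ⟨hconn.coe, ?_⟩
    intro w
    by_cases hwA : w ∈ A.support
    · by_cases hwu : w = u
      · subst hwu
        exact del_first A B hA hB hne
      by_cases hwv : w = v
      · subst hwv
        have hrw : A.toSubgraph ⊔ B.toSubgraph
            = A.reverse.toSubgraph ⊔ B.reverse.toSubgraph := by
          rw [Walk.toSubgraph_reverse, Walk.toSubgraph_reverse]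
        rw [hrw]
        exact del_first A.reverse B.reverse hA.reverse hB.reverse (Ne.symm hne)
      · have hwB : w ∉ B.support := by
          intro hwB
          rcases hint w hwA hwB with h | h
          · exact hwu h
          · exact hwv h
        exact del_internal A B hA hB hwA hwu hwv hwB
    · by_cases hwB : w ∈ B.support
      · have hwu : w ≠ u := by rintro rfl; exact hwA A.start_mem_support
        have hwv : w ≠ v := by rintro rfl; exact hwA A.end_mem_support
        have hrw : A.toSubgraph ⊔ B.toSubgraph = B.toSubgraph ⊔ A.toSubgraph := sup_comm _ _
        rw [hrw]
        exact del_internal B A hB hA hwB hwu hwv hwA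
      · refine conn_del_of_pieces _ w _ hconn ?_ ?_ ?_ ?_
        · exact fun x hx => hx
        · rw [mem_verts_sup_toSubgraph]
          rintro (h | h)
          · exact hwA h
          · exact hwB h
        · exact fun x y h => h
        · exact fun x hx _ => hx
  obtain ⟨Bk, hBk, hleBk⟩ := exists_block_above hbi
  have hu : u ∈ Bk.verts := hleBk.1 (by
    rw [Subgraph.verts_sup]; exact Or.inl A.start_mem_verts_toSubgraph)
  have hv : v ∈ Bk.verts := hleBk.1 (by
    rw [Subgraph.verts_sup]; exact Or.inl A.end_mem_verts_toSubgraph)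
  exact Bk.adj_sub (hBG Bk hBk u hu v hv hne)

end BGaux
namespace BGaux

set_option linter.unusedSectionVars false

variable {V : Type*} [DecidableEq V] {G : SimpleGraph V}

open SimpleGraph.Walk

/-- In a block graph, if both endpoints of an induced path `R` lie on an induced path `Q`,
then all of `R` lies on `Q`. -/
lemma verts_subset_of_ends_mem [Fintype V] (hBG : IsBlockGraph G) (Q : InducedPath G) :
    ∀ n (R : InducedPath G), R.walk.length = n → R.first ∈ Q.vertexSet →
      R.last ∈ Q.vertexSet → R.vertexSet ⊆ Q.vertexSet := by
  intro n
  induction n using Nat.strong_induction_on with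
  | _ n IH =>
    intro R hlen h1 h2
    by_cases hfl : R.first = R.last
    · intro x hx
      have := support_eq_single R.walk R.isPath hfl x hx
      rw [this]
      exact h1
    by_cases hadj : G.Adj R.first R.last
    · have he : s(R.first, R.last) ∈ R.walk.edges :=
        R.induced _ R.walk.start_mem_support _ R.walk.end_mem_support hadj
      intro x hx
      rcases ends_edge_support R.walk R.isPath he x hx with rfl | rfl
      · exact h1
      · exact h2
    by_cases hint : ∃ m, m ∈ R.walk.support ∧ m ≠ R.first ∧ m ≠ R.last ∧ m ∈ Q.vertexSet
    · obtain ⟨m, hm, hmf, hml, hmQ⟩ := hint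
      have hsum : (R.walk.takeUntil m hm).length + (R.walk.dropUntil m hm).length = n := by
        rw [← hlen]
        conv_rhs => rw [← R.walk.take_spec hm]
        rw [Walk.length_append]
      have hpos1 : 0 < (R.walk.takeUntil m hm).length :=
        length_pos_of_ne _ (fun e => hmf e.symm)
      have hpos2 : 0 < (R.walk.dropUntil m hm).length := length_pos_of_ne _ hml
      have hR1 := IH (R.walk.takeUntil m hm).length (by omega) (IPtake R m hm) rfl h1 hmQ
      have hR2 := IH (R.walk.dropUntil m hm).length (by omega) (IPdrop R m hm) rfl hmQ h2
      intro x hx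
      have hx' : x ∈ (R.walk.takeUntil m hm).support ∨ x ∈ (R.walk.dropUntil m hm).support := by
        rw [← Walk.mem_support_append_iff, R.walk.take_spec hm]
        exact hx
      rcases hx' with h | h
      · exact hR1 h
      · exact hR2 h
    · exfalso
      push_neg at hint
      have hfQ : R.first ∈ Q.walk.support := h1
      have hlQ : R.last ∈ Q.walk.support := h2
      have hBw : ∃ Bw : G.Walk R.first R.last, Bw.IsPath ∧
          ∀ x ∈ Bw.support, x ∈ Q.walk.support := by
        rcases mem_dropUntil_or Q.walk hfQ hlQ with hc | hc
        · refine ⟨(Q.walk.dropUntil R.first hfQ).takeUntil R.last hc,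
            (Q.isPath.dropUntil hfQ).takeUntil hc, ?_⟩
          intro x hx
          exact Q.walk.support_dropUntil_subset hfQ
            ((Q.walk.dropUntil R.first hfQ).support_takeUntil_subset hc hx)
        · refine ⟨((Q.walk.dropUntil R.last hlQ).takeUntil R.first hc).reverse,
            ((Q.isPath.dropUntil hlQ).takeUntil hc).reverse, ?_⟩
          intro x hx
          rw [Walk.support_reverse, List.mem_reverse] at hx
          exact Q.walk.support_dropUntil_subset hlQ
            ((Q.walk.dropUntil R.last hlQ).support_takeUntil_subset hc hx)
      obtain ⟨Bw, hBwp, hBwQ⟩ := hBw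
      refine hadj (cycle_adj hBG hfl R.walk Bw R.isPath hBwp ?_)
      intro x hxR hxB
      by_contra hcon
      push_neg at hcon
      exact hint x hxR hcon.1 hcon.2 (hBwQ x hxB)

end BGaux
namespace BGaux

set_option linter.unusedSectionVars false

variable {V : Type*} [DecidableEq V] {G : SimpleGraph V}

open SimpleGraph.Walk

/-- Given an orientation `φ` of an induced path `P` and a vertex `x` of `P` with
`x ≠ φ 1`, there is a walk from `φ 0` to `x` inside `P` avoiding `φ 1`. -/
lemma orient_segment (P : InducedPath G) (φ : Fin 2 → V) (h : IsOrientation G P φ)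
    (x : V) (hx : x ∈ P.walk.support) (hne : x ≠ φ 1) :
    ∃ w : G.Walk (φ 0) x, (∀ y ∈ w.support, y ∈ P.walk.support) ∧ φ 1 ∉ w.support := by
  have hpair : ({φ 0, φ 1} : Set V) = {P.first, P.last} := by
    rw [← range_fin2]
    exact h
  rcases pair_eq_cases hpair with ⟨h0, h1⟩ | ⟨h0, h1⟩
  · refine ⟨(P.walk.takeUntil x hx).copy h0.symm rfl, ?_, ?_⟩
    · intro y hy
      rw [Walk.support_copy] at hy
      exact P.walk.support_takeUntil_subset hx hy
    · rw [Walk.support_copy]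
      intro hmem
      have hlast : φ 1 ∈ (P.walk.dropUntil x hx).support := by
        rw [h1]
        exact Walk.end_mem_support _
      exact hne (eq_of_mem_take_drop P.walk P.isPath hx hmem hlast).symm
  · refine ⟨((P.walk.dropUntil x hx).reverse).copy h0.symm rfl, ?_, ?_⟩
    · intro y hy
      rw [Walk.support_copy, Walk.support_reverse, List.mem_reverse] at hy
      exact P.walk.support_dropUntil_subset hx hy
    · rw [Walk.support_copy, Walk.support_reverse, List.mem_reverse]
      intro hmem
      have hfirst : φ 1 ∈ (P.walk.takeUntil x hx).support := by
        rw [h1]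
        exact Walk.start_mem_support _
      exact hne (eq_of_mem_take_drop P.walk P.isPath hx hfirst hmem).symm

lemma forward_core [Fintype V] (hBG : IsBlockGraph G) {ℓ : ℕ} (P : Fin ℓ → InducedPath G)
    (φ : Fin ℓ → Fin 2 → V)
    (horient : ∀ i, IsOrientation G (P i) (φ i)) (i j : Fin ℓ) (hij : i ≠ j)
    (Q : InducedPath G) (hQind : IsPathOfInd G P Q)
    (hf : Q.first = φ i 0) (hl : Q.last = φ j 1)
    (hQnc : ∀ k, ¬ PathContains G Q (P k)) :
    ∃ Q' : InducedPath G, IsStrand G P φ i j Q' := by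
  have hbd : ∀ (k : Fin ℓ), (P k).boundary = {φ k 0, φ k 1} := by
    intro k
    rw [← (horient k), range_fin2]
  have hbd0 : ∀ k : Fin ℓ, φ k 0 ∈ (P k).vertexSet := fun k =>
    boundary_subset_vertexSet (P k) ((horient k) ▸ Set.mem_range_self 0)
  have hbd1 : ∀ k : Fin ℓ, φ k 1 ∈ (P k).vertexSet := fun k =>
    boundary_subset_vertexSet (P k) ((horient k) ▸ Set.mem_range_self 1)
  have hQfirstPi : Q.first ∈ (P i).vertexSet := hf ▸ hbd0 i
  have hQlastPj : Q.last ∈ (P j).vertexSet := hl ▸ hbd1 j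
  have hcontain : ∀ k : Fin ℓ, φ k 0 ∈ Q.vertexSet → φ k 1 ∈ Q.vertexSet → False := by
    intro k hk0 hk1
    have hfQ : (P k).first ∈ Q.vertexSet := by
      have hmem : (P k).first ∈ ({φ k 0, φ k 1} : Set V) := by
        rw [← hbd k]
        exact Or.inl rfl
      rcases hmem with h | h
      · rw [h]; exact hk0
      · rw [h]; exact hk1
    have hlQ : (P k).last ∈ Q.vertexSet := by
      have hmem : (P k).last ∈ ({φ k 0, φ k 1} : Set V) := by
        rw [← hbd k]
        exact Or.inr rfl
      rcases hmem with h | h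
      · rw [h]; exact hk0
      · rw [h]; exact hk1
    have hsub := verts_subset_of_ends_mem hBG Q (P k).walk.length (P k) rfl hfQ hlQ
    exact hQnc k (pathContains_of_verts Q (P k) hsub)
  obtain ⟨a, ha, haPi, hlastprop⟩ := exists_last_hit Q.walk Q.isPath (P i).vertexSet
    ⟨Q.first, Q.walk.start_mem_support, hQfirstPi⟩
  have hbex : ∃ x ∈ (Q.walk.dropUntil a ha).support, x ∈ (P j).vertexSet :=
    ⟨Q.last, Walk.end_mem_support _, hQlastPj⟩
  obtain ⟨b, hb, hbPj, hfirstprop⟩ := exists_first_hit (Q.walk.dropUntil a ha)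
    (P j).vertexSet hbex
  set Q' : InducedPath G := IPtake (IPdrop Q a ha) b hb with hQ'
  have hQ'subQ : ∀ x ∈ Q'.walk.support, x ∈ Q.walk.support := fun x hx =>
    Q.walk.support_dropUntil_subset ha
      ((Q.walk.dropUntil a ha).support_takeUntil_subset hb hx)
  have haQ : a ∈ Q.vertexSet := ha
  have hbQ : b ∈ Q.vertexSet := Q.walk.support_dropUntil_subset ha hb
  have haneq : a ≠ φ i 1 := by
    intro h
    refine hcontain i (hf ▸ Q.walk.start_mem_support) ?_
    rw [← h]
    exact haQ
  have hbneq : b ≠ φ j 0 := by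
    intro h
    refine hcontain j ?_ (hl ▸ Q.walk.end_mem_support)
    rw [← h]
    exact hbQ
  refine ⟨Q', hij, ?_, haneq, hbneq, ?_, ?_, ?_⟩
  · exact fun x hx => hQind (hQ'subQ x hx)
  · ext x
    constructor
    · rintro ⟨hx1, hx2⟩
      have hx1' : x ∈ (Q.walk.dropUntil a ha).support :=
        (Q.walk.dropUntil a ha).support_takeUntil_subset hb hx1
      exact hlastprop x hx1' hx2
    · rintro rfl
      exact ⟨Walk.start_mem_support _, haPi⟩
  · ext x
    constructor
    · rintro ⟨hx1, hx2⟩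
      exact hfirstprop x hx1 hx2
    · rintro rfl
      exact ⟨Walk.end_mem_support _, hbPj⟩
  · intro k hcon
    exact hQnc k (pathContains_of_verts Q (P k) (fun x hx => hQ'subQ x (hcon.1 hx)))

lemma backward_core {ℓ : ℕ} (P : Fin ℓ → InducedPath G)
    (hdisj : PairwiseVertexDisjoint G P) (φ : Fin ℓ → Fin 2 → V)
    (horient : ∀ i, IsOrientation G (P i) (φ i)) (i j : Fin ℓ) (hij : i ≠ j)
    (Q : InducedPath G) (hstrand : IsStrand G P φ i j Q) :
    KArc G P φ i j := by
  obtain ⟨-, hQind, hQf, hQl, hQPi, hQPj, hQnc⟩ := hstrand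
  have hQfPi : Q.first ∈ (P i).walk.support := by
    have : Q.first ∈ Q.vertexSet ∩ (P i).vertexSet := by
      rw [hQPi]; exact rfl
    exact this.2
  have hQlPj : Q.last ∈ (P j).walk.support := by
    have : Q.last ∈ Q.vertexSet ∩ (P j).vertexSet := by
      rw [hQPj]; exact rfl
    exact this.2
  obtain ⟨w1, hw1P, hw1no⟩ := orient_segment (P i) (φ i) (horient i) Q.first hQfPi hQf
  have horj : IsOrientation G (P j) ![φ j 1, φ j 0] := by
    unfold IsOrientation
    rw [range_fin2, ← (horient j), range_fin2]
    simp [Set.pair_comm]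
  have hQlne : Q.last ≠ (![φ j 1, φ j 0] : Fin 2 → V) 1 := by simpa using hQl
  obtain ⟨w3', hw3P, hw3no⟩ := orient_segment (P j) ![φ j 1, φ j 0] horj Q.last hQlPj hQlne
  set w3 : G.Walk (φ j 1) Q.last := w3'.copy (Matrix.cons_val_zero _ _) rfl with hw3def
  have hw3P' : ∀ y ∈ w3.support, y ∈ (P j).walk.support := by
    intro y hy
    rw [hw3def, Walk.support_copy] at hy
    exact hw3P y hy
  have hw3no' : φ j 0 ∉ w3.support := by
    rw [hw3def, Walk.support_copy]
    simpa using hw3no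
  set w : G.Walk (φ i 0) (φ j 1) := w1.append (Q.walk.append w3.reverse) with hwdef
  have hdecomp : ∀ x ∈ w.support,
      x ∈ w1.support ∨ x ∈ Q.walk.support ∨ x ∈ w3.support := by
    intro x hx
    rw [hwdef, Walk.mem_support_append_iff, Walk.mem_support_append_iff,
      Walk.support_reverse, List.mem_reverse] at hx
    tauto
  obtain ⟨R, hRf, hRl, hRW⟩ := exists_induced_path_in {x | x ∈ w.support} w
    (fun x hx => hx)
  refine ⟨R, ?_, by rw [hRf, hRl], ?_⟩
  · intro x hx
    rcases hdecomp x (hRW x hx) with h | h | h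
    · exact Set.mem_iUnion.mpr ⟨i, hw1P x h⟩
    · exact hQind h
    · exact Set.mem_iUnion.mpr ⟨j, hw3P' x h⟩
  · intro k hcon
    by_cases hk : k = i
    · subst hk
      have h1 : φ k 1 ∈ R.vertexSet := hcon.1 (boundary_subset_vertexSet (P k)
        ((horient k) ▸ Set.mem_range_self 1))
      rcases hdecomp _ (hRW _ h1) with h | h | h
      · exact hw1no h
      · have : φ k 1 ∈ Q.vertexSet ∩ (P k).vertexSet := ⟨h, boundary_subset_vertexSet (P k)
          ((horient k) ▸ Set.mem_range_self 1)⟩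
        rw [hQPi] at this
        exact hQf this.symm
      · exact Set.disjoint_left.mp (hdisj k j hij)
          (boundary_subset_vertexSet (P k) ((horient k) ▸ Set.mem_range_self 1))
          (hw3P' _ h)
    by_cases hk' : k = j
    · subst hk'
      have h0 : φ k 0 ∈ R.vertexSet := hcon.1 (boundary_subset_vertexSet (P k)
        ((horient k) ▸ Set.mem_range_self 0))
      rcases hdecomp _ (hRW _ h0) with h | h | h
      · exact Set.disjoint_left.mp (hdisj k i (Ne.symm hij))
          (boundary_subset_vertexSet (P k) ((horient k) ▸ Set.mem_range_self 0))
          (hw1P _ h)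
      · have : φ k 0 ∈ Q.vertexSet ∩ (P k).vertexSet := ⟨h, boundary_subset_vertexSet (P k)
          ((horient k) ▸ Set.mem_range_self 0)⟩
        rw [hQPj] at this
        exact hQl this.symm
      · exact hw3no' h
    · have hsub : (P k).vertexSet ⊆ Q.vertexSet := by
        intro x hx
        rcases hdecomp x (hRW x (hcon.1 hx)) with h | h | h
        · exact absurd (hw1P x h) (Set.disjoint_left.mp (hdisj k i hk) hx)
        · exact h
        · exact absurd (hw3P' x h) (Set.disjoint_left.mp (hdisj k j hk') hx)
      exact hQnc k (pathContains_of_verts Q (P k) hsub)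

end BGaux
/-- **Theorem (Statement 9).** For vertex-disjoint induced oriented paths of a finite
simple block graph and `i ≠ j`, the multigraph `K_{P_ind}` contains the arc `(i,j)`
if and only if `P_ind` contains a strand from `P i` to `P j`. -/
theorem blockGraph_KArc_iff_strand {V : Type*} [Fintype V] [DecidableEq V]
    (G : SimpleGraph V) (hBG : IsBlockGraph G) (ℓ : ℕ) (P : Fin ℓ → InducedPath G)
    (hdisj : PairwiseVertexDisjoint G P) (φ : Fin ℓ → Fin 2 → V)
    (horient : ∀ i, IsOrientation G (P i) (φ i)) (i j : Fin ℓ) (hij : i ≠ j) :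
    KArc G P φ i j ↔ ∃ Q : InducedPath G, IsStrand G P φ i j Q := by
  constructor
  · rintro ⟨Q, hQind, hQends, hQnc⟩
    rcases BGaux.pair_eq_cases hQends with ⟨hf, hl⟩ | ⟨hf, hl⟩
    · exact BGaux.forward_core hBG P φ horient i j hij Q hQind hf hl hQnc
    · refine BGaux.forward_core hBG P φ horient i j hij (BGaux.IPrev Q) ?_ hl hf ?_
      · intro x hx
        have hx' : x ∈ Q.walk.support := by
          have : x ∈ Q.walk.reverse.support := hx
          rwa [SimpleGraph.Walk.support_reverse, List.mem_reverse] at this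
        exact hQind hx'
      · intro k hcon
        refine hQnc k (BGaux.pathContains_of_verts Q (P k) ?_)
        intro x hx
        have := hcon.1 hx
        have hx' : x ∈ Q.walk.reverse.support := this
        rwa [SimpleGraph.Walk.support_reverse, List.mem_reverse] at hx'
  · rintro ⟨Q, hs⟩
    exact BGaux.backward_core P hdisj φ horient i j hij Q hs
end
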